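/- arXiv:2408.05486 — 6 statements merged into one kernel-verified Lean document; each statement's English description precedes it below -/
import Mathlib

section
/- Let ρ : 𝒳̃ → 𝒳 be a CC covering between featureless combinatorial complexes, and let M be a HOMP model with T layers. Denote by h^{(t)} and h̃^{(t)} the cell feature maps computed by M on 𝒳 and on 𝒳̃ at layer t. Then h̃^{(t)}_{x'} = h^{(t)}_{ρ(x')} for every t = 0, …, T and every cell x' of 𝒳̃. -/
/-! Basic framework: combinatorial complexes, natural neighborhood functions,
CC coverings, Hasse graphs, and higher-order message-passing (HOMP) models. -/

namespace TDL

/-- The raw data of a combinatorial complex over an ambient node type `S`: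
a set of cells (finite, nonempty subsets of nodes) and a rank function. -/
structure PreCC (S : Type*) where
  cells : Set (Finset S)
  rk : Finset S → ℕ

/-- A (featureless) combinatorial complex.  The node set is implicitly the set of
elements appearing in cells; every singleton of such a node is a cell of rank `0`,
cells are nonempty, there are finitely many cells, and the rank function is
monotone with respect to inclusion. -/
structure CC (S : Type*) extends PreCC S where
  cells_finite : cells.Finite
  nonempty_of_mem : ∀ x ∈ cells, x.Nonempty
  singleton_mem : ∀ x ∈ cells, ∀ s ∈ x, ({s} : Finset S) ∈ cells
  rk_singleton : ∀ s : S, ({s} : Finset S) ∈ cells → rk {s} = 0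
  rk_mono : ∀ x ∈ cells, ∀ y ∈ cells, x ⊆ y → rk x ≤ rk y

/-- Names of the natural neighborhood functions: `(r₁,r₂)`-adjacency,
coadjacency, incidence and co-incidence. -/
inductive NbhdKind : Type
  | adj (r₁ r₂ : ℕ)
  | coadj (r₁ r₂ : ℕ)
  | inc (r₁ r₂ : ℕ)
  | coinc (r₁ r₂ : ℕ)
  deriving DecidableEq

/-- The two ranks mentioned by a neighborhood kind are bounded by `ℓ`. -/
def NbhdKind.bounded (ℓ : ℕ) : NbhdKind → Prop
  | .adj r₁ r₂ => r₁ ≤ ℓ ∧ r₂ ≤ ℓ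
  | .coadj r₁ r₂ => r₁ ≤ ℓ ∧ r₂ ≤ ℓ
  | .inc r₁ r₂ => r₁ ≤ ℓ ∧ r₂ ≤ ℓ
  | .coinc r₁ r₂ => r₁ ≤ ℓ ∧ r₂ ≤ ℓ

namespace PreCC

variable {S : Type*}

/-- The `r`-skeleton: the set of cells of rank `r`. -/
def skel (X : PreCC S) (r : ℕ) : Set (Finset S) := {x | x ∈ X.cells ∧ X.rk x = r}

/-- The natural neighborhood functions of a complex. -/
def nbhd (X : PreCC S) : NbhdKind → Finset S → Set (Finset S)
  | .adj r₁ r₂, x => {y | x ∈ X.skel r₁ ∧ y ∈ X.skel r₁ ∧ ∃ z ∈ X.skel r₂, x ⊆ z ∧ y ⊆ z}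
  | .coadj r₁ r₂, x => {y | x ∈ X.skel r₁ ∧ y ∈ X.skel r₁ ∧ ∃ z ∈ X.skel r₂, z ⊆ x ∧ z ⊆ y}
  | .inc r₁ r₂, x => {y | x ∈ X.skel r₁ ∧ y ∈ X.skel r₂ ∧ x ⊆ y}
  | .coinc r₁ r₂, x => {y | x ∈ X.skel r₁ ∧ y ∈ X.skel r₂ ∧ y ⊆ x}

/-- The Hasse graph of a complex: vertices are cells, and `x, y` are joined by an
edge whenever `x ⊆ y` and `rk x = rk y - 1` (or symmetrically). -/
def hasse (X : PreCC S) : SimpleGraph {x : Finset S // x ∈ X.cells} where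
  Adj a b := (a.1 ⊆ b.1 ∧ X.rk a.1 + 1 = X.rk b.1) ∨ (b.1 ⊆ a.1 ∧ X.rk b.1 + 1 = X.rk a.1)
  symm := by
    constructor
    rintro a b (h | h)
    · exact Or.inr h
    · exact Or.inl h
  loopless := by constructor; rintro a (⟨-, h⟩ | ⟨-, h⟩) <;> omega

end PreCC

/-- `ρ` is a CC covering of `X` by `Xt`: it maps cells of `Xt` to cells of `X`
surjectively, preserves ranks, and is a local isomorphism with respect to every
natural neighborhood function. -/
structure IsCovering {S' S : Type*} (Xt : PreCC S') (X : PreCC S)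
    (ρ : Finset S' → Finset S) : Prop where
  mem : ∀ x' ∈ Xt.cells, ρ x' ∈ X.cells
  surj : ∀ x ∈ X.cells, ∃ x' ∈ Xt.cells, ρ x' = x
  rank : ∀ x' ∈ Xt.cells, X.rk (ρ x') = Xt.rk x'
  locBij : ∀ x' ∈ Xt.cells, ∀ N : NbhdKind, Set.BijOn ρ (Xt.nbhd N x') (X.nbhd N (ρ x'))

open Classical in
/-- The multiset underlying a finite set (junk value `0` for infinite sets). -/
noncomputable def setMultiset {α : Type*} (s : Set α) : Multiset α :=
  if h : s.Finite then h.toFinset.val else 0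

/-- A higher-order message-passing (HOMP) model over a feature space `D`, for
featureless complexes of dimension at most `ℓ`: a number of layers `T`, an initial
constant feature, and, per layer, message functions (per neighborhood function and
rank), permutation-invariant aggregations (functions of multisets), a combination
operator over the family of neighborhood functions with ranks at most `ℓ`,
activations, and a readout defined on multisets. -/
structure HOMP (D : Type*) (ℓ : ℕ) where
  T : ℕ
  init : D
  msg : ℕ → NbhdKind → ℕ → D → D → D
  agg : ℕ → NbhdKind → Multiset D → D
  comb : ℕ → ({N : NbhdKind // N.bounded ℓ} → D) → D
  act : ℕ → D → D
  readout : Multiset D → D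

namespace HOMP

variable {D : Type*} {ℓ : ℕ} {S : Type*}

/-- The cell feature maps computed by a HOMP model on a complex:
`h⁰_x` is the initial constant, and
`h^{t+1}_x = β_t (⊗_N (⊕ {{ m_{t,N,rk x}(h^t_x, h^t_y) : y ∈ N(x) }}))`. -/
noncomputable def feat (M : HOMP D ℓ) (X : PreCC S) : ℕ → Finset S → D
  | 0, _ => M.init
  | t + 1, x =>
      M.act t <| M.comb t fun N =>
        M.agg t N.1 <|
          (setMultiset (X.nbhd N.1 x)).map fun y =>
            M.msg t N.1 (X.rk x) (M.feat X t x) (M.feat X t y)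

/-- The output of a HOMP model: the readout of the multiset of final features. -/
noncomputable def out (M : HOMP D ℓ) (X : PreCC S) : D :=
  M.readout <| (setMultiset X.cells).map fun x => M.feat X M.T x

end HOMP

end TDL

namespace TDL

open Classical in
lemma setMultiset_map_of_bijOn {α β : Type*} {f : α → β} {s : Set α} {t : Set β}
    (hs : s.Finite) (hb : Set.BijOn f s t) :
    (setMultiset s).map f = setMultiset t := by
  have ht : t.Finite := hb.image_eq ▸ hs.image f
  rw [setMultiset, setMultiset, dif_pos hs, dif_pos ht]
  have himg : hs.toFinset.image f = ht.toFinset := by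
    ext b
    simp only [Finset.mem_image, Set.Finite.mem_toFinset]
    constructor
    · rintro ⟨a, ha, rfl⟩; exact hb.mapsTo ha
    · intro hbmem
      obtain ⟨a, ha, rfl⟩ := hb.surjOn hbmem
      exact ⟨a, ha, rfl⟩
  have hnodup : (hs.toFinset.val.map f).Nodup := by
    refine Multiset.Nodup.map_on ?_ hs.toFinset.nodup
    intro a ha b hb' hab
    exact hb.injOn (hs.mem_toFinset.1 ha) (hs.mem_toFinset.1 hb') hab
  calc hs.toFinset.val.map f = (hs.toFinset.val.map f).dedup := (Multiset.dedup_eq_self.2 hnodup).symm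
    _ = (hs.toFinset.image f).val := (Finset.image_val _ _).symm
    _ = ht.toFinset.val := by rw [himg]

lemma nbhd_subset_cells {S : Type*} (X : PreCC S) (N : NbhdKind) (x : Finset S) :
    X.nbhd N x ⊆ X.cells := by
  cases N <;> exact fun y hy => hy.2.1.1

/-- If `ρ : Xt → X` is a CC covering between featureless combinatorial complexes
and `M` is a HOMP model with `T` layers, then the feature computed by `M` on `Xt`
at any cell `x'` agrees with the feature computed by `M` on `X` at `ρ x'`, at
every layer `t = 0, …, T`. -/
theorem covering_feat_eq
    {S' S : Type} (Xt : CC S') (X : CC S) (ρ : Finset S' → Finset S)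
    (hρ : IsCovering Xt.toPreCC X.toPreCC ρ)
    {D : Type} {ℓ : ℕ} (M : HOMP D ℓ)
    (t : ℕ) (ht : t ≤ M.T) (x' : Finset S') (hx' : x' ∈ Xt.cells) :
    M.feat Xt.toPreCC t x' = M.feat X.toPreCC t (ρ x') := by
  clear ht
  induction t generalizing x' with
  | zero => rfl
  | succ t ih =>
    show M.act t _ = M.act t _
    congr 1
    apply congrArg
    funext N
    apply congrArg
    have hfin : (Xt.toPreCC.nbhd N.1 x').Finite :=
      Xt.cells_finite.subset (nbhd_subset_cells _ _ _)
    have hb := hρ.locBij x' hx' N.1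
    rw [← setMultiset_map_of_bijOn hfin hb, Multiset.map_map]
    apply Multiset.map_congr rfl
    intro y hy
    have hyS : y ∈ Xt.toPreCC.nbhd N.1 x' := by
      rw [setMultiset, dif_pos hfin] at hy
      exact hfin.mem_toFinset.1 hy
    have hycell : y ∈ Xt.cells := nbhd_subset_cells _ _ _ hyS
    simp only [Function.comp_apply]
    rw [hρ.rank x' hx', ih x' hx', ih y hycell]

end TDL
end

section
/- If ρ : 𝒳̃ → 𝒳 is a CC covering, then for every natural neighborhood function 𝒩 and every cell x of 𝒳, the family of sets {𝒩(x') : x' ∈ ρ⁻¹(x)} is pairwise disjoint, i.e. 𝒩(x'₁) ∩ 𝒩(x'₂) = ∅ for any two distinct cells x'₁, x'₂ in the fiber ρ⁻¹(x). -/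
namespace TDL

/-- Dual neighborhood kind: `y ∈ N(x)` iff `x ∈ N*(y)`. -/
def NbhdKind.dual : NbhdKind → NbhdKind
  | .adj r₁ r₂ => .adj r₁ r₂
  | .coadj r₁ r₂ => .coadj r₁ r₂
  | .inc r₁ r₂ => .coinc r₂ r₁
  | .coinc r₁ r₂ => .inc r₂ r₁

lemma mem_nbhd_dual {S : Type*} (X : PreCC S) (N : NbhdKind) (x y : Finset S)
    (h : y ∈ X.nbhd N x) : x ∈ X.nbhd N.dual y := by
  cases N <;> simp only [PreCC.nbhd, NbhdKind.dual, Set.mem_setOf_eq] at h ⊢ <;> tauto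

lemma mem_cells_of_mem_nbhd {S : Type*} (X : PreCC S) (N : NbhdKind) (x y : Finset S)
    (h : y ∈ X.nbhd N x) : y ∈ X.cells := by
  cases N <;> exact h.2.1.1

/-- If `ρ : Xt → X` is a CC covering then, for every natural neighborhood
function `N` and every cell `x` of `X`, the neighborhoods of distinct cells in
the fiber `ρ⁻¹(x)` are pairwise disjoint. -/
theorem covering_fiber_nbhd_disjoint
    {S' S : Type} (Xt : CC S') (X : CC S) (ρ : Finset S' → Finset S)
    (hρ : IsCovering Xt.toPreCC X.toPreCC ρ)
    (N : NbhdKind) (x : Finset S) (hx : x ∈ X.cells)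
    (x'₁ x'₂ : Finset S') (h₁ : x'₁ ∈ Xt.cells) (h₂ : x'₂ ∈ Xt.cells)
    (hρ₁ : ρ x'₁ = x) (hρ₂ : ρ x'₂ = x) (hne : x'₁ ≠ x'₂) :
    Xt.toPreCC.nbhd N x'₁ ∩ Xt.toPreCC.nbhd N x'₂ = ∅ := by
  apply Set.eq_empty_iff_forall_notMem.mpr
  rintro y ⟨hy₁, hy₂⟩
  have hyc : y ∈ Xt.cells := mem_cells_of_mem_nbhd _ N x'₁ y hy₁
  have hd₁ := mem_nbhd_dual _ N x'₁ y hy₁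
  have hd₂ := mem_nbhd_dual _ N x'₂ y hy₂
  exact hne ((hρ.locBij y hyc N.dual).injOn hd₁ hd₂ (hρ₁.trans hρ₂.symm))

end TDL
end

section
/- For integers h, p ≥ 3, the map on cells induced by the node map ρ_cyl^{h,p} restricted to the nodes [h] × [2p] of the cylinder CC Cyl_{h,2p} is a CC covering of Cyl_{h,p} by Cyl_{h,2p}. -/
namespace TDL

/-- The residue of `n` modulo `p` taken in `{1, …, p}`. -/
def residue (p n : ℕ) : ℕ := (n - 1) % p + 1

/-- The node map `ρ_cyl^{h,p}(s₁, s₂) = (s₁, s₂ mod p)`, residues in `{1,…,p}`. -/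
def rhoCyl (p : ℕ) (s : ℕ × ℕ) : ℕ × ℕ := (s.1, residue p s.2)

/-- The node map `ρ_möb^{h,p}`: `(s₁, s₂ mod p)` if `s₂ mod 2p ≤ p`, and
`(h + 1 − s₁, s₂ mod p)` otherwise, residues taken in `{1,…,p}` and `{1,…,2p}`. -/
def rhoMob (h p : ℕ) (s : ℕ × ℕ) : ℕ × ℕ :=
  if residue (2 * p) s.2 ≤ p then (s.1, residue p s.2) else (h + 1 - s.1, residue p s.2)

/-- The node set `[h] × [p]`. -/
def gridNodes (h p : ℕ) : Set (ℕ × ℕ) :=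
  {s | 1 ≤ s.1 ∧ s.1 ≤ h ∧ 1 ≤ s.2 ∧ s.2 ≤ p}

/-- Coordinatewise addition of `k ∈ {0,1}²` to a node. -/
def addK (s : ℕ × ℕ) (k : Bool × Bool) : ℕ × ℕ :=
  (s.1 + (if k.1 then 1 else 0), s.2 + (if k.2 then 1 else 0))

/-- The cell `s_k = { ρ(s + k') : k' ∈ {0,1}², k' ≤ k }`. -/
def stripCell (ρ : ℕ × ℕ → ℕ × ℕ) (s : ℕ × ℕ) (k : Bool × Bool) : Finset (ℕ × ℕ) :=
  (Finset.univ.filter fun k' : Bool × Bool => k'.1 ≤ k.1 ∧ k'.2 ≤ k.2).image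
    fun k' => ρ (addK s k')

/-- The rank `k₁ + k₂` of the cell `s_k`. -/
def stripRank (k : Bool × Bool) : ℕ :=
  (if k.1 then 1 else 0) + (if k.2 then 1 else 0)

/-- The complex with node set `[h] × [p]` glued via the node map `ρ`: for
`r ∈ {0,1,2}` its `r`-cells are the sets `s_k` with `s ∈ [h] × [p]`,
`k ∈ {0,1}²`, `k₁ + k₂ = r` and `ρ(s + k) ∈ [h] × [p]`. -/
noncomputable def stripPre (h p : ℕ) (ρ : ℕ × ℕ → ℕ × ℕ) : PreCC (ℕ × ℕ) where
  cells := {x | ∃ s ∈ gridNodes h p, ∃ k : Bool × Bool,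
    ρ (addK s k) ∈ gridNodes h p ∧ x = stripCell ρ s k}
  rk x := sInf {r | ∃ s ∈ gridNodes h p, ∃ k : Bool × Bool,
    ρ (addK s k) ∈ gridNodes h p ∧ x = stripCell ρ s k ∧ r = stripRank k}

/-- The cylinder combinatorial complex `Cyl_{h,p}`. -/
noncomputable def cylPre (h p : ℕ) : PreCC (ℕ × ℕ) := stripPre h p (rhoCyl p)

/-- The Möbius strip combinatorial complex `Möb_{h,p}`. -/
noncomputable def mobPre (h p : ℕ) : PreCC (ℕ × ℕ) := stripPre h p (rhoMob h p)

end TDL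

namespace TDL

private def bn : Bool → ℕ
  | true => 1
  | false => 0

private lemma bn_le_one (b : Bool) : bn b ≤ 1 := by cases b <;> simp [bn]

private lemma bn_inj {b b' : Bool} (h : bn b = bn b') : b = b' := by
  cases b <;> cases b' <;> simp_all [bn]

private lemma residue_pos (q n : ℕ) : 1 ≤ residue q n := by unfold residue; omega

private lemma residue_le {q : ℕ} (hq : 1 ≤ q) (n : ℕ) : residue q n ≤ q := by
  have := Nat.mod_lt (n - 1) (show 0 < q by omega)
  unfold residue; omega

private lemma residue_eq_self {q n : ℕ} (h1 : 1 ≤ n) (h2 : n ≤ q) : residue q n = n := by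
  unfold residue; rw [Nat.mod_eq_of_lt (by omega)]; omega

private lemma residue_shift {q : ℕ} {n : ℕ} (hn : 1 ≤ n) (c : ℕ) :
    residue q (residue q n + c) = residue q (n + c) := by
  unfold residue
  have h1 : (n - 1) % q + 1 + c - 1 = (n - 1) % q + c := by omega
  have h2 : n + c - 1 = (n - 1) + c := by omega
  rw [h1, h2, Nat.mod_add_mod]

private lemma residue_residue {q n : ℕ} : residue q (residue q n) = residue q n := by
  unfold residue
  have e : (n - 1) % q + 1 - 1 = (n - 1) % q := by omega
  rw [e, Nat.mod_mod_of_dvd _ dvd_rfl]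

private lemma residue_congr_add {q x y : ℕ} (hx : 1 ≤ x) (hy : 1 ≤ y)
    (h : residue q x = residue q y) (c : ℕ) : residue q (x + c) = residue q (y + c) := by
  rw [← residue_shift hx c, h, residue_shift hy c]

private lemma residue_cancel {q x y c : ℕ} (hx : 1 ≤ x) (hy : 1 ≤ y)
    (h : residue q (x + c) = residue q (y + c)) : residue q x = residue q y := by
  unfold residue at h ⊢
  have e1 : x + c - 1 = (x - 1) + c := by omega
  have e2 : y + c - 1 = (y - 1) + c := by omega
  rw [e1, e2] at h
  have h' : (x - 1) + c ≡ (y - 1) + c [MOD q] := by unfold Nat.ModEq; omega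
  have := Nat.ModEq.add_right_cancel' c h'
  unfold Nat.ModEq at this; omega

private lemma residue_window {q m d₁ d₂ : ℕ} (hm : 1 ≤ m) (h₁ : d₁ < q) (h₂ : d₂ < q)
    (h : residue q (m + d₁) = residue q (m + d₂)) : d₁ = d₂ := by
  unfold residue at h
  have e1 : m + d₁ - 1 = (m - 1) + d₁ := by omega
  have e2 : m + d₂ - 1 = (m - 1) + d₂ := by omega
  rw [e1, e2] at h
  have h' : (m - 1) + d₁ ≡ (m - 1) + d₂ [MOD q] := by unfold Nat.ModEq; omega
  have := Nat.ModEq.add_left_cancel' (m - 1) h'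
  unfold Nat.ModEq at this
  rw [Nat.mod_eq_of_lt h₁, Nat.mod_eq_of_lt h₂] at this
  exact this

private lemma residue_comp {p n : ℕ} : residue p (residue (2 * p) n) = residue p n := by
  unfold residue
  have e : (n - 1) % (2 * p) + 1 - 1 = (n - 1) % (2 * p) := by omega
  rw [e, Nat.mod_mod_of_dvd _ ⟨2, by ring⟩]

private lemma residue_add_self {q n : ℕ} (hn : 1 ≤ n) : residue q (n + q) = residue q n := by
  unfold residue
  have e : n + q - 1 = (n - 1) + q := by omega
  rw [e, Nat.add_mod_right]

private def cellOf (q a b : ℕ) (k : Bool × Bool) : Finset (ℕ × ℕ) :=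
  stripCell (rhoCyl q) (a, b) k

private def arc (q b : ℕ) : Bool → Finset ℕ
  | true => {residue q b, residue q (b + 1)}
  | false => {residue q b}

private lemma cellOf_eq (q a b : ℕ) (k : Bool × Bool) :
    cellOf q a b k = Finset.Icc a (a + bn k.1) ×ˢ arc q b k.2 := by
  rcases k with ⟨k₁, k₂⟩
  ext ⟨u, v⟩
  simp only [cellOf, stripCell, Finset.mem_image, Finset.mem_filter, Finset.mem_univ, true_and,
    Finset.mem_product, Finset.mem_Icc, Prod.exists, addK, rhoCyl, bn]
  cases k₁ <;> cases k₂ <;> (try simp only [reduceIte]) <;> constructor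
  · rintro ⟨b1, b2, ⟨h1, h2⟩, h⟩
    cases b1 <;> cases b2 <;> (try exact absurd h1 (by decide)) <;>
      (try exact absurd h2 (by decide)) <;> simp_all [arc, Prod.ext_iff] <;> omega
  · rintro ⟨⟨h1, h2⟩, h3⟩
    refine ⟨false, false, by simp, ?_⟩
    simp_all [arc, Prod.ext_iff]
    omega
  · rintro ⟨b1, b2, ⟨h1, h2⟩, h⟩
    cases b1 <;> cases b2 <;> (try exact absurd h1 (by decide)) <;>
      (try exact absurd h2 (by decide)) <;> simp_all [arc, Prod.ext_iff] <;> omega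
  · rintro ⟨⟨h1, h2⟩, h3⟩
    simp only [arc, Finset.mem_insert, Finset.mem_singleton] at h3
    rcases h3 with h3 | h3
    · exact ⟨false, false, by simp, by simp_all [Prod.ext_iff]; omega⟩
    · exact ⟨false, true, by simp, by simp_all [Prod.ext_iff]; omega⟩
  · rintro ⟨b1, b2, ⟨h1, h2⟩, h⟩
    cases b1 <;> cases b2 <;> (try exact absurd h1 (by decide)) <;>
      (try exact absurd h2 (by decide)) <;> simp_all [arc, Prod.ext_iff] <;> omega
  · rintro ⟨⟨h1, h2⟩, h3⟩
    simp only [arc, Finset.mem_singleton] at h3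
    have : u = a ∨ u = a + 1 := by omega
    rcases this with rfl | rfl
    · exact ⟨false, false, by simp, by simp_all [Prod.ext_iff]⟩
    · exact ⟨true, false, by simp, by simp_all [Prod.ext_iff]⟩
  · rintro ⟨b1, b2, ⟨h1, h2⟩, h⟩
    cases b1 <;> cases b2 <;> (try exact absurd h1 (by decide)) <;>
      (try exact absurd h2 (by decide)) <;> simp_all [arc, Prod.ext_iff] <;> omega
  · rintro ⟨⟨h1, h2⟩, h3⟩
    simp only [arc, Finset.mem_insert, Finset.mem_singleton] at h3
    have hu : u = a ∨ u = a + 1 := by omega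
    rcases hu with rfl | rfl <;> rcases h3 with h3 | h3
    · exact ⟨false, false, by simp, by simp_all [Prod.ext_iff]⟩
    · exact ⟨false, true, by simp, by simp_all [Prod.ext_iff]⟩
    · exact ⟨true, false, by simp, by simp_all [Prod.ext_iff]⟩
    · exact ⟨true, true, by simp, by simp_all [Prod.ext_iff]⟩

private lemma arc_nonempty (q b : ℕ) (j : Bool) : (arc q b j).Nonempty := by
  cases j <;> simp [arc]

private lemma prod_sub_iff {s s' : Finset ℕ} {t t' : Finset ℕ}
    (hs : s.Nonempty) (ht : t.Nonempty) : s ×ˢ t ⊆ s' ×ˢ t' ↔ s ⊆ s' ∧ t ⊆ t' := by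
  constructor
  · intro hsub
    obtain ⟨x, hx⟩ := hs
    obtain ⟨y, hy⟩ := ht
    constructor
    · intro u hu
      exact (Finset.mem_product.mp (hsub (Finset.mk_mem_product hu hy))).1
    · intro v hv
      exact (Finset.mem_product.mp (hsub (Finset.mk_mem_product hx hv))).2
  · rintro ⟨h1, h2⟩
    exact Finset.product_subset_product h1 h2

private lemma arc_subset_iff {q b b' : ℕ} (hq : 3 ≤ q) (hb : 1 ≤ b) (hb' : 1 ≤ b')
    (j j' : Bool) : arc q b j ⊆ arc q b' j' ↔
      ∃ j₀, j₀ + bn j ≤ bn j' ∧ residue q b = residue q (b' + j₀) := by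
  cases j <;> cases j' <;> simp only [bn]
  · simp only [arc, bn, Finset.singleton_subset_iff, Finset.mem_singleton, reduceIte]
    constructor
    · intro h
      exact ⟨0, by omega, by simpa using h⟩
    · rintro ⟨j₀, hj, he⟩
      have hj0 : j₀ = 0 := by omega
      subst hj0
      simpa using he
  · simp only [arc, bn, Finset.singleton_subset_iff, Finset.mem_insert, Finset.mem_singleton,
      reduceIte]
    constructor
    · rintro (h | h)
      · exact ⟨0, by omega, by simpa using h⟩
      · exact ⟨1, by omega, h⟩
    · rintro ⟨j₀, hj, he⟩
      have hj' : j₀ = 0 ∨ j₀ = 1 := by omega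
      rcases hj' with rfl | rfl
      · left; simpa using he
      · right; exact he
  · simp only [arc, bn, Finset.insert_subset_iff, Finset.singleton_subset_iff,
      Finset.mem_singleton, reduceIte]
    constructor
    · rintro ⟨h1, h2⟩
      exfalso
      have e2 : residue q (b + 0) = residue q (b + 1) := by
        rw [Nat.add_zero, h1, ← h2]
      have := residue_window hb (by omega) (by omega) e2
      omega
    · rintro ⟨j₀, hj, _⟩
      omega
  · simp only [arc, bn, Finset.insert_subset_iff, Finset.singleton_subset_iff,
      Finset.mem_insert, Finset.mem_singleton, reduceIte]
    constructor
    · rintro ⟨h1 | h1, h2 | h2⟩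
      · exact ⟨0, by omega, by simpa using h1⟩
      · exact ⟨0, by omega, by simpa using h1⟩
      · exfalso
        have e1 : residue q (b + 1 + 1) = residue q (b' + 1) := residue_congr_add (by omega) hb' h2 1
        have e2 : residue q (b + 0) = residue q (b + 2) := by
          rw [Nat.add_zero, h1, ← e1]
        have := residue_window hb (by omega) (by omega) e2
        omega
      · exfalso
        have e2 : residue q (b + 0) = residue q (b + 1) := by
          rw [Nat.add_zero, h1, ← h2]
        have := residue_window hb (by omega) (by omega) e2
        omega
    · rintro ⟨j₀, hj, he⟩
      have hj0 : j₀ = 0 := by omega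
      subst hj0
      rw [Nat.add_zero] at he
      exact ⟨Or.inl he, Or.inr (residue_congr_add hb hb' he 1)⟩

private lemma cellOf_subset_iff {q a b a' b' : ℕ} {k k' : Bool × Bool}
    (hq : 3 ≤ q) (hb : 1 ≤ b) (hb' : 1 ≤ b') :
    cellOf q a b k ⊆ cellOf q a' b' k' ↔
      (∃ i₀, i₀ + bn k.1 ≤ bn k'.1 ∧ a = a' + i₀) ∧
      (∃ j₀, j₀ + bn k.2 ≤ bn k'.2 ∧ residue q b = residue q (b' + j₀)) := by
  rw [cellOf_eq, cellOf_eq,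
    prod_sub_iff (Finset.nonempty_Icc.mpr (by omega)) (arc_nonempty q b k.2),
    arc_subset_iff hq hb hb', Finset.Icc_subset_Icc_iff (by omega)]
  constructor
  · rintro ⟨⟨h1, h2⟩, h3⟩
    exact ⟨⟨a - a', by omega, by omega⟩, h3⟩
  · rintro ⟨⟨i₀, hi, rfl⟩, h3⟩
    exact ⟨⟨by omega, by omega⟩, h3⟩

private lemma cellOf_congr {q a b b' : ℕ} {k : Bool × Bool} (hb : 1 ≤ b) (hb' : 1 ≤ b')
    (h : residue q b = residue q b') : cellOf q a b k = cellOf q a b' k := by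
  rw [cellOf_eq, cellOf_eq]
  have h1 : residue q (b + 1) = residue q (b' + 1) := residue_congr_add hb hb' h 1
  cases k.2 <;> simp [arc, h, h1]

private lemma mem_cells_iff {h q : ℕ} (hq : 1 ≤ q) {x : Finset (ℕ × ℕ)} :
    x ∈ (cylPre h q).cells ↔ ∃ a b : ℕ, ∃ k : Bool × Bool,
      1 ≤ a ∧ a + bn k.1 ≤ h ∧ 1 ≤ b ∧ b ≤ q ∧ x = cellOf q a b k := by
  constructor
  · rintro ⟨⟨a, b⟩, ⟨ha1, ha2, hb1, hb2⟩, ⟨k₁, k₂⟩, hcond, rfl⟩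
    refine ⟨a, b, (k₁, k₂), ha1, ?_, hb1, hb2, rfl⟩
    have := hcond.2.1
    simp only [rhoCyl, addK] at this
    cases k₁ <;> simpa [bn] using this
  · rintro ⟨a, b, ⟨k₁, k₂⟩, ha1, hah, hb1, hb2, rfl⟩
    simp only [bn] at hah
    refine ⟨(a, b), ⟨ha1, by cases k₁ <;> simp_all <;> omega, hb1, hb2⟩, (k₁, k₂), ?_, rfl⟩
    refine ⟨?_, ?_, ?_, ?_⟩
    · simp only [rhoCyl, addK]
      omega
    · simp only [rhoCyl, addK]
      cases k₁ <;> simp_all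
    · exact residue_pos q _
    · exact residue_le hq _

private lemma card_cellOf {q b : ℕ} (hq : 2 ≤ q) (hb : 1 ≤ b) (a : ℕ) (k : Bool × Bool) :
    (cellOf q a b k).card = 2 ^ stripRank k := by
  have harc : ∀ j : Bool, (arc q b j).card = bn j + 1 := by
    intro j
    cases j
    · simp [arc, bn]
    · have hne : residue q b ≠ residue q (b + 1) := by
        intro hcon
        have : (0 : ℕ) = 1 := residue_window (q := q) (m := b) (d₁ := 0) (d₂ := 1) hb
          (by omega) (by omega) (by rw [Nat.add_zero]; exact hcon)
        omega
      simp [arc, bn, hne]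
  rw [cellOf_eq, Finset.card_product, Nat.card_Icc, harc]
  rcases k with ⟨k₁, k₂⟩
  cases k₁ <;> cases k₂ <;> simp [bn, stripRank] <;> omega

private lemma rk_cellOf {h q a b : ℕ} {k : Bool × Bool} (hq : 2 ≤ q)
    (ha1 : 1 ≤ a) (hah : a + bn k.1 ≤ h) (hb1 : 1 ≤ b) (hb2 : b ≤ q) :
    (cylPre h q).rk (cellOf q a b k) = stripRank k := by
  have hset : {r | ∃ s ∈ gridNodes h q, ∃ k' : Bool × Bool,
      rhoCyl q (addK s k') ∈ gridNodes h q ∧ cellOf q a b k = stripCell (rhoCyl q) s k' ∧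
      r = stripRank k'} = {stripRank k} := by
    ext r
    simp only [Set.mem_setOf_eq, Set.mem_singleton_iff]
    constructor
    · rintro ⟨⟨a', b'⟩, hs, k', hcond, heq, rfl⟩
      have hb'1 : 1 ≤ b' := hs.2.2.1
      have hcards : (2 : ℕ) ^ stripRank k = 2 ^ stripRank k' := by
        rw [← card_cellOf hq hb1 a k, heq]
        exact card_cellOf hq hb'1 a' k'
      exact (Nat.pow_right_injective (le_refl 2) hcards).symm
    · rintro rfl
      refine ⟨(a, b), ⟨ha1, ?_, hb1, hb2⟩, k, ⟨?_, ?_, ?_, ?_⟩, rfl, rfl⟩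
      · have := bn_le_one k.1; omega
      · have h1 : (rhoCyl q (addK (a, b) k)).1 = a + (if k.1 then 1 else 0) := rfl
        rw [h1]; omega
      · have h1 : (rhoCyl q (addK (a, b) k)).1 = a + (if k.1 then 1 else 0) := rfl
        rw [h1]
        cases hk : k.1 <;> simp only [hk, bn] at hah ⊢ <;> simpa using hah
      · exact residue_pos q _
      · exact residue_le (by omega) _
  have hrk : (cylPre h q).rk (cellOf q a b k) = sInf {r | ∃ s ∈ gridNodes h q,
      ∃ k' : Bool × Bool, rhoCyl q (addK s k') ∈ gridNodes h q ∧
      cellOf q a b k = stripCell (rhoCyl q) s k' ∧ r = stripRank k'} := rfl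
  rw [hrk, hset, csInf_singleton]

private lemma image_cellOf (p a b : ℕ) (k : Bool × Bool) :
    (cellOf (2 * p) a b k).image (rhoCyl p) = cellOf p a b k := by
  unfold cellOf stripCell
  rw [Finset.image_image]
  refine Finset.image_congr ?_
  intro k' _
  show rhoCyl p (rhoCyl (2 * p) (addK (a, b) k')) = rhoCyl p (addK (a, b) k')
  unfold rhoCyl
  simp [residue_comp]

private lemma mem_map {h p : ℕ} (hp : 1 ≤ p) {x : Finset (ℕ × ℕ)}
    (hx : x ∈ (cylPre h (2 * p)).cells) : x.image (rhoCyl p) ∈ (cylPre h p).cells := by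
  rw [mem_cells_iff (by omega)] at hx
  obtain ⟨a, b, k, ha1, hah, hb1, hb2, rfl⟩ := hx
  rw [image_cellOf]
  rw [mem_cells_iff hp]
  exact ⟨a, residue p b, k, ha1, hah, residue_pos p b, residue_le hp b,
    cellOf_congr hb1 (residue_pos p b) (residue_residue (q := p) (n := b)).symm⟩

private lemma rank_map {h p : ℕ} (hp : 3 ≤ p) {x : Finset (ℕ × ℕ)}
    (hx : x ∈ (cylPre h (2 * p)).cells) :
    (cylPre h p).rk (x.image (rhoCyl p)) = (cylPre h (2 * p)).rk x := by
  rw [mem_cells_iff (by omega)] at hx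
  obtain ⟨a, b, k, ha1, hah, hb1, hb2, rfl⟩ := hx
  rw [image_cellOf]
  rw [rk_cellOf (by omega) ha1 hah hb1 hb2]
  have h1 : cellOf p a b k = cellOf p a (residue p b) k :=
    cellOf_congr hb1 (residue_pos p b) (residue_residue (q := p) (n := b)).symm
  rw [h1, rk_cellOf (by omega) ha1 hah (residue_pos p b) (residue_le (by omega) b)]

private lemma skel_map {h p r : ℕ} (hp : 3 ≤ p) {x : Finset (ℕ × ℕ)}
    (hx : x ∈ (cylPre h (2 * p)).cells) :
    x ∈ (cylPre h (2 * p)).skel r ↔ x.image (rhoCyl p) ∈ (cylPre h p).skel r := by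
  constructor
  · rintro ⟨h1, h2⟩
    exact ⟨mem_map (by omega) hx, by rw [rank_map hp hx]; exact h2⟩
  · rintro ⟨h1, h2⟩
    exact ⟨hx, by rw [← rank_map hp hx]; exact h2⟩

private lemma cellOf_inj_p {p a₁ b₁ a₂ b₂ : ℕ} {k₁ k₂ : Bool × Bool} (hp : 3 ≤ p)
    (hb₁ : 1 ≤ b₁) (hb₂ : 1 ≤ b₂) (heq : cellOf p a₁ b₁ k₁ = cellOf p a₂ b₂ k₂) :
    a₁ = a₂ ∧ k₁ = k₂ ∧ residue p b₁ = residue p b₂ := by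
  have hf := (cellOf_subset_iff hp hb₁ hb₂).mp heq.le
  have hb := (cellOf_subset_iff hp hb₂ hb₁).mp heq.symm.le
  obtain ⟨⟨i₀, hi₀, ha₀⟩, j₀, hj₀, he₀⟩ := hf
  obtain ⟨⟨i₁, hi₁, ha₁⟩, j₁, hj₁, he₁⟩ := hb
  have hi : i₀ = 0 ∧ i₁ = 0 := by omega
  have hk1 : k₁.1 = k₂.1 := bn_inj (by omega)
  have step : residue p (b₂ + j₀) = residue p (b₁ + j₁ + j₀) :=
    residue_congr_add hb₂ (by omega) he₁ j₀
  have hj : residue p (b₁ + 0) = residue p (b₁ + (j₁ + j₀)) := by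
    rw [Nat.add_zero, he₀, step, add_assoc]
  have hz := residue_window (q := p) (m := b₁) (d₁ := 0) (d₂ := j₁ + j₀) hb₁
    (by omega) (by omega) hj
  have hj₀0 : j₀ = 0 := by omega
  have hk2 : k₁.2 = k₂.2 := bn_inj (by omega)
  refine ⟨by omega, ?_, by simpa [hj₀0] using he₀⟩
  rcases k₁ with ⟨x1, x2⟩
  rcases k₂ with ⟨y1, y2⟩
  simp only [Prod.mk.injEq]
  exact ⟨hk1, hk2⟩

private lemma inj_core {p b b₁ b₂ u₁ v₁ u₂ v₂ : ℕ} (hp : 3 ≤ p)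
    (hb : 1 ≤ b) (hb₁ : 1 ≤ b₁) (hb₂ : 1 ≤ b₂)
    (hu₁ : u₁ ≤ 1) (hv₁ : v₁ ≤ 1) (hu₂ : u₂ ≤ 1) (hv₂ : v₂ ≤ 1)
    (h₁ : residue (2 * p) (b₁ + u₁) = residue (2 * p) (b + v₁))
    (h₂ : residue (2 * p) (b₂ + u₂) = residue (2 * p) (b + v₂))
    (hmod : residue p b₁ = residue p b₂) :
    residue (2 * p) b₁ = residue (2 * p) b₂ := by
  have e₁ : residue (2 * p) (b₁ + u₁ + u₂) = residue (2 * p) (b + v₁ + u₂) :=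
    residue_congr_add (by omega) (by omega) h₁ u₂
  have e₂ : residue (2 * p) (b₂ + u₂ + u₁) = residue (2 * p) (b + v₂ + u₁) :=
    residue_congr_add (by omega) (by omega) h₂ u₁
  have p₁ : residue p (b₁ + u₁ + u₂) = residue p (b + v₁ + u₂) := by
    rw [← residue_comp (p := p) (n := b₁ + u₁ + u₂), e₁, residue_comp]
  have p₂ : residue p (b₂ + u₂ + u₁) = residue p (b + v₂ + u₁) := by
    rw [← residue_comp (p := p) (n := b₂ + u₂ + u₁), e₂, residue_comp]
  have pm : residue p (b₁ + (u₁ + u₂)) = residue p (b₂ + (u₁ + u₂)) :=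
    residue_congr_add hb₁ hb₂ hmod (u₁ + u₂)
  have a1 : b + (v₁ + u₂) = b + v₁ + u₂ := by omega
  have a2 : b₁ + u₁ + u₂ = b₁ + (u₁ + u₂) := by omega
  have a3 : b₂ + (u₁ + u₂) = b₂ + u₂ + u₁ := by omega
  have a4 : b + v₂ + u₁ = b + (v₂ + u₁) := by omega
  have pw : residue p (b + (v₁ + u₂)) = residue p (b + (v₂ + u₁)) := by
    calc residue p (b + (v₁ + u₂)) = residue p (b + v₁ + u₂) := by rw [a1]
      _ = residue p (b₁ + u₁ + u₂) := p₁.symm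
      _ = residue p (b₁ + (u₁ + u₂)) := by rw [a2]
      _ = residue p (b₂ + (u₁ + u₂)) := pm
      _ = residue p (b₂ + u₂ + u₁) := by rw [a3]
      _ = residue p (b + v₂ + u₁) := p₂
      _ = residue p (b + (v₂ + u₁)) := by rw [a4]
  have hvw : v₁ + u₂ = v₂ + u₁ :=
    residue_window (q := p) (m := b) hb (by omega) (by omega) pw
  have final : residue (2 * p) (b₁ + (u₁ + u₂)) = residue (2 * p) (b₂ + (u₁ + u₂)) := by
    calc residue (2 * p) (b₁ + (u₁ + u₂)) = residue (2 * p) (b₁ + u₁ + u₂) := by rw [← a2]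
      _ = residue (2 * p) (b + v₁ + u₂) := e₁
      _ = residue (2 * p) (b + v₂ + u₁) := by rw [show b + v₁ + u₂ = b + v₂ + u₁ by omega]
      _ = residue (2 * p) (b₂ + u₂ + u₁) := e₂.symm
      _ = residue (2 * p) (b₂ + (u₁ + u₂)) := by rw [← a3]
  exact residue_cancel hb₁ hb₂ final

private lemma injOn_near {h p : ℕ} (hp : 3 ≤ p) {x' : Finset (ℕ × ℕ)}
    (hx' : x' ∈ (cylPre h (2 * p)).cells) {y₁ y₂ : Finset (ℕ × ℕ)}
    (hy₁ : y₁ ∈ (cylPre h (2 * p)).cells) (hy₂ : y₂ ∈ (cylPre h (2 * p)).cells)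
    (n₁ : ∃ z ∈ (cylPre h (2 * p)).cells, (x' ⊆ z ∧ y₁ ⊆ z) ∨ (z ⊆ x' ∧ z ⊆ y₁))
    (n₂ : ∃ z ∈ (cylPre h (2 * p)).cells, (x' ⊆ z ∧ y₂ ⊆ z) ∨ (z ⊆ x' ∧ z ⊆ y₂))
    (himg : y₁.image (rhoCyl p) = y₂.image (rhoCyl p)) : y₁ = y₂ := by
  have hq2 : (3 : ℕ) ≤ 2 * p := by omega
  obtain ⟨a, b, k, ha1, hah, hb1, hb2, rfl⟩ := (mem_cells_iff (by omega)).mp hx'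
  obtain ⟨a₁, b₁, k₁, ha11, hah1, hb11, hb21, rfl⟩ := (mem_cells_iff (by omega)).mp hy₁
  obtain ⟨a₂, b₂, k₂, ha12, hah2, hb12, hb22, rfl⟩ := (mem_cells_iff (by omega)).mp hy₂
  have window : ∀ (a' b' : ℕ) (k' : Bool × Bool), 1 ≤ b' →
      (∃ z ∈ (cylPre h (2 * p)).cells,
        (cellOf (2 * p) a b k ⊆ z ∧ cellOf (2 * p) a' b' k' ⊆ z) ∨
        (z ⊆ cellOf (2 * p) a b k ∧ z ⊆ cellOf (2 * p) a' b' k')) →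
      ∃ u v : ℕ, u ≤ 1 ∧ v ≤ 1 ∧
        residue (2 * p) (b' + u) = residue (2 * p) (b + v) := by
    rintro a' b' k' hb' ⟨z, hz, hcase⟩
    obtain ⟨α, β, κ, _, _, hβ1, hβ2, rfl⟩ := (mem_cells_iff (by omega)).mp hz
    rcases hcase with ⟨h1, h2⟩ | ⟨h1, h2⟩
    · obtain ⟨_, j₀, hj₀, he₀⟩ := (cellOf_subset_iff hq2 hb1 hβ1).mp h1
      obtain ⟨_, j₁, hj₁, he₁⟩ := (cellOf_subset_iff hq2 hb' hβ1).mp h2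
      have hbn := bn_le_one κ.2
      refine ⟨j₀, j₁, by omega, by omega, ?_⟩
      have c1 : residue (2 * p) (b' + j₀) = residue (2 * p) (β + j₁ + j₀) :=
        residue_congr_add hb' (by omega) he₁ j₀
      have c2 : residue (2 * p) (b + j₁) = residue (2 * p) (β + j₀ + j₁) :=
        residue_congr_add hb1 (by omega) he₀ j₁
      rw [c1, c2, show β + j₁ + j₀ = β + j₀ + j₁ by omega]
    · obtain ⟨_, j₀, hj₀, he₀⟩ := (cellOf_subset_iff hq2 hβ1 hb1).mp h1
      obtain ⟨_, j₁, hj₁, he₁⟩ := (cellOf_subset_iff hq2 hβ1 hb').mp h2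
      have hbn := bn_le_one k.2
      have hbn' := bn_le_one k'.2
      exact ⟨j₁, j₀, by omega, by omega, by rw [← he₁, he₀]⟩
  obtain ⟨u₁, v₁, hu₁, hv₁, w₁⟩ := window a₁ b₁ k₁ hb11 n₁
  obtain ⟨u₂, v₂, hu₂, hv₂, w₂⟩ := window a₂ b₂ k₂ hb12 n₂
  rw [image_cellOf, image_cellOf] at himg
  obtain ⟨ha, hk, hres⟩ := cellOf_inj_p hp hb11 hb12 himg
  subst ha
  subst hk
  exact cellOf_congr hb11 hb12 (inj_core hp hb1 hb11 hb12 hu₁ hv₁ hu₂ hv₂ w₁ w₂ hres)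

private lemma lift_up {h p : ℕ} (hp : 3 ≤ p) {x' y : Finset (ℕ × ℕ)}
    (hx' : x' ∈ (cylPre h (2 * p)).cells) (hy : y ∈ (cylPre h p).cells)
    (hsub : x'.image (rhoCyl p) ⊆ y) :
    ∃ y' ∈ (cylPre h (2 * p)).cells, x' ⊆ y' ∧ y'.image (rhoCyl p) = y := by
  obtain ⟨a, b, k, ha1, hah, hb1, hb2, rfl⟩ := (mem_cells_iff (by omega)).mp hx'
  obtain ⟨a', c, k', ha1', hah', hc1, hc2, rfl⟩ := (mem_cells_iff (by omega)).mp hy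
  rw [image_cellOf] at hsub
  obtain ⟨⟨i₀, hi₀, hai⟩, j₀, hj₀, he₀⟩ := (cellOf_subset_iff hp hb1 hc1).mp hsub
  have hj1 : j₀ ≤ 1 := by have := bn_le_one k'.2; omega
  have hx1 : 1 ≤ b + 2 * p - j₀ := by omega
  have key2p : residue (2 * p) (residue (2 * p) (b + 2 * p - j₀) + j₀) = residue (2 * p) b := by
    rw [residue_shift hx1 j₀, show b + 2 * p - j₀ + j₀ = b + 2 * p by omega]
    exact residue_add_self hb1
  refine ⟨cellOf (2 * p) a' (residue (2 * p) (b + 2 * p - j₀)) k', ?_, ?_, ?_⟩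
  · exact (mem_cells_iff (by omega)).mpr ⟨a', residue (2 * p) (b + 2 * p - j₀), k', ha1', hah',
      residue_pos _ _, residue_le (by omega) _, rfl⟩
  · exact (cellOf_subset_iff (by omega) hb1 (residue_pos _ _)).mpr
      ⟨⟨i₀, hi₀, hai⟩, j₀, hj₀, key2p.symm⟩
  · rw [image_cellOf]
    refine cellOf_congr (residue_pos _ _) hc1 ?_
    refine residue_cancel (residue_pos _ _) hc1 (c := j₀) ?_
    calc residue p (residue (2 * p) (b + 2 * p - j₀) + j₀)
        = residue p (residue (2 * p) (residue (2 * p) (b + 2 * p - j₀) + j₀)) :=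
          residue_comp.symm
      _ = residue p (residue (2 * p) b) := by rw [key2p]
      _ = residue p b := residue_comp
      _ = residue p (c + j₀) := he₀

private lemma lift_down {h p : ℕ} (hp : 3 ≤ p) {x' y : Finset (ℕ × ℕ)}
    (hx' : x' ∈ (cylPre h (2 * p)).cells) (hy : y ∈ (cylPre h p).cells)
    (hsub : y ⊆ x'.image (rhoCyl p)) :
    ∃ y' ∈ (cylPre h (2 * p)).cells, y' ⊆ x' ∧ y'.image (rhoCyl p) = y := by
  obtain ⟨a, b, k, ha1, hah, hb1, hb2, rfl⟩ := (mem_cells_iff (by omega)).mp hx'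
  obtain ⟨a', c, k', ha1', hah', hc1, hc2, rfl⟩ := (mem_cells_iff (by omega)).mp hy
  rw [image_cellOf] at hsub
  obtain ⟨⟨i₀, hi₀, hai⟩, j₀, hj₀, he₀⟩ := (cellOf_subset_iff hp hc1 hb1).mp hsub
  refine ⟨cellOf (2 * p) a' (residue (2 * p) (b + j₀)) k', ?_, ?_, ?_⟩
  · exact (mem_cells_iff (by omega)).mpr ⟨a', residue (2 * p) (b + j₀), k', ha1', hah',
      residue_pos _ _, residue_le (by omega) _, rfl⟩
  · exact (cellOf_subset_iff (by omega) (residue_pos _ _) hb1).mpr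
      ⟨⟨i₀, hi₀, hai⟩, j₀, hj₀, residue_residue⟩
  · rw [image_cellOf]
    refine cellOf_congr (residue_pos _ _) hc1 ?_
    calc residue p (residue (2 * p) (b + j₀))
        = residue p (b + j₀) := residue_comp
      _ = residue p c := he₀.symm

/-- For `h, p ≥ 3`, the map on cells induced by the node map `ρ_cyl^{h,p}`
(restricted to the nodes `[h] × [2p]`) is a CC covering of the cylinder
`Cyl_{h,p}` by the cylinder `Cyl_{h,2p}`. -/
theorem cyl_covering (h p : ℕ) (hh : 3 ≤ h) (hp : 3 ≤ p) :
    IsCovering (cylPre h (2 * p)) (cylPre h p) (fun x => x.image (rhoCyl p)) := by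
  constructor
  · intro x' hx'
    exact mem_map (by omega) hx'
  · intro x hx
    obtain ⟨a, b, k, ha1, hah, hb1, hb2, rfl⟩ := (mem_cells_iff (by omega)).mp hx
    exact ⟨cellOf (2 * p) a b k,
      (mem_cells_iff (by omega)).mpr ⟨a, b, k, ha1, hah, hb1, by omega, rfl⟩,
      image_cellOf p a b k⟩
  · intro x' hx'
    exact rank_map hp hx'
  · intro x' hx' N
    cases N with
    | inc r₁ r₂ =>
      refine ⟨?_, ?_, ?_⟩
      · rintro y ⟨hx1, hy2, hxy⟩
        exact ⟨(skel_map hp hx').mp hx1, (skel_map hp hy2.1).mp hy2,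
          Finset.image_subset_image hxy⟩
      · rintro y₁ ⟨_, hy₁s, hxy₁⟩ y₂ ⟨_, hy₂s, hxy₂⟩ he
        exact injOn_near hp hx' hy₁s.1 hy₂s.1
          ⟨y₁, hy₁s.1, Or.inl ⟨hxy₁, Finset.Subset.refl _⟩⟩
          ⟨y₂, hy₂s.1, Or.inl ⟨hxy₂, Finset.Subset.refl _⟩⟩ he
      · rintro y ⟨hFx1, hy2, hsub⟩
        obtain ⟨y', hy'c, hsubs, himg⟩ := lift_up hp hx' hy2.1 hsub
        have hrk : (cylPre h (2 * p)).rk y' = r₂ := by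
          have hr := rank_map hp hy'c
          rw [himg] at hr
          rw [← hr]
          exact hy2.2
        exact ⟨y', ⟨(skel_map hp hx').mpr hFx1, ⟨hy'c, hrk⟩, hsubs⟩, himg⟩
    | coinc r₁ r₂ =>
      refine ⟨?_, ?_, ?_⟩
      · rintro y ⟨hx1, hy2, hxy⟩
        exact ⟨(skel_map hp hx').mp hx1, (skel_map hp hy2.1).mp hy2,
          Finset.image_subset_image hxy⟩
      · rintro y₁ ⟨_, hy₁s, hxy₁⟩ y₂ ⟨_, hy₂s, hxy₂⟩ he
        exact injOn_near hp hx' hy₁s.1 hy₂s.1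
          ⟨y₁, hy₁s.1, Or.inr ⟨hxy₁, Finset.Subset.refl _⟩⟩
          ⟨y₂, hy₂s.1, Or.inr ⟨hxy₂, Finset.Subset.refl _⟩⟩ he
      · rintro y ⟨hFx1, hy2, hsub⟩
        obtain ⟨y', hy'c, hsubs, himg⟩ := lift_down hp hx' hy2.1 hsub
        have hrk : (cylPre h (2 * p)).rk y' = r₂ := by
          have hr := rank_map hp hy'c
          rw [himg] at hr
          rw [← hr]
          exact hy2.2
        exact ⟨y', ⟨(skel_map hp hx').mpr hFx1, ⟨hy'c, hrk⟩, hsubs⟩, himg⟩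
    | adj r₁ r₂ =>
      refine ⟨?_, ?_, ?_⟩
      · rintro y ⟨hx1, hy1, z, hz, hxz, hyz⟩
        exact ⟨(skel_map hp hx').mp hx1, (skel_map hp hy1.1).mp hy1,
          z.image (rhoCyl p), (skel_map hp hz.1).mp hz,
          Finset.image_subset_image hxz, Finset.image_subset_image hyz⟩
      · rintro y₁ ⟨_, hy₁s, z₁, hz₁, hxz₁, hyz₁⟩ y₂ ⟨_, hy₂s, z₂, hz₂, hxz₂, hyz₂⟩ he
        exact injOn_near hp hx' hy₁s.1 hy₂s.1
          ⟨z₁, hz₁.1, Or.inl ⟨hxz₁, hyz₁⟩⟩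
          ⟨z₂, hz₂.1, Or.inl ⟨hxz₂, hyz₂⟩⟩ he
      · rintro y ⟨hFx1, hy1, z, hz, hxz, hyz⟩
        obtain ⟨z', hz'c, hxz', hzimg⟩ := lift_up hp hx' hz.1 hxz
        obtain ⟨y', hy'c, hyz', hyimg⟩ := lift_down hp hz'c hy1.1
          (by rw [hzimg]; exact hyz)
        have hrky : (cylPre h (2 * p)).rk y' = r₁ := by
          have hr := rank_map hp hy'c
          rw [hyimg] at hr
          rw [← hr]
          exact hy1.2
        have hrkz : (cylPre h (2 * p)).rk z' = r₂ := by
          have hr := rank_map hp hz'c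
          rw [hzimg] at hr
          rw [← hr]
          exact hz.2
        exact ⟨y', ⟨(skel_map hp hx').mpr hFx1, ⟨hy'c, hrky⟩, z', ⟨hz'c, hrkz⟩, hxz', hyz'⟩,
          hyimg⟩
    | coadj r₁ r₂ =>
      refine ⟨?_, ?_, ?_⟩
      · rintro y ⟨hx1, hy1, z, hz, hzx, hzy⟩
        exact ⟨(skel_map hp hx').mp hx1, (skel_map hp hy1.1).mp hy1,
          z.image (rhoCyl p), (skel_map hp hz.1).mp hz,
          Finset.image_subset_image hzx, Finset.image_subset_image hzy⟩
      · rintro y₁ ⟨_, hy₁s, z₁, hz₁, hzx₁, hzy₁⟩ y₂ ⟨_, hy₂s, z₂, hz₂, hzx₂, hzy₂⟩ he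
        exact injOn_near hp hx' hy₁s.1 hy₂s.1
          ⟨z₁, hz₁.1, Or.inr ⟨hzx₁, hzy₁⟩⟩
          ⟨z₂, hz₂.1, Or.inr ⟨hzx₂, hzy₂⟩⟩ he
      · rintro y ⟨hFx1, hy1, z, hz, hzx, hzy⟩
        obtain ⟨z', hz'c, hzx', hzimg⟩ := lift_down hp hx' hz.1 hzx
        obtain ⟨y', hy'c, hzy', hyimg⟩ := lift_up hp hz'c hy1.1
          (by rw [hzimg]; exact hzy)
        have hrky : (cylPre h (2 * p)).rk y' = r₁ := by
          have hr := rank_map hp hy'c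
          rw [hyimg] at hr
          rw [← hr]
          exact hy1.2
        have hrkz : (cylPre h (2 * p)).rk z' = r₂ := by
          have hr := rank_map hp hz'c
          rw [hzimg] at hr
          rw [← hr]
          exact hz.2
        exact ⟨y', ⟨(skel_map hp hx').mpr hFx1, ⟨hy'c, hrky⟩, z', ⟨hz'c, hrkz⟩, hzx', hzy'⟩,
          hyimg⟩

end TDL
end

section
/- For integers h, p ≥ 3, the map on cells induced by the node map ρ_möb^{h,p} restricted to the nodes [h] × [2p] of the cylinder CC Cyl_{h,2p} is a CC covering of the Möbius strip CC Möb_{h,p} by Cyl_{h,2p}. -/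
namespace TDL

/-! ### Auxiliary machinery for the covering theorem -/

/-- Numeric value of a boolean coordinate of `k`. -/
def kb (b : Bool) : ℕ := if b then 1 else 0

lemma kb_le_one (b : Bool) : kb b ≤ 1 := by cases b <;> simp [kb]

/-- The deck transformation on base points of cells of the cylinder. -/
def dagS (h p : ℕ) (s : ℕ × ℕ) (k : Bool × Bool) : ℕ × ℕ :=
  (h + 1 - s.1 - kb k.1, if s.2 ≤ p then s.2 + p else s.2 - p)

/-- The deck transformation on nodes of the cylinder. -/
def tauN (h p : ℕ) (a : ℕ × ℕ) : ℕ × ℕ :=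
  (h + 1 - a.1, if a.2 ≤ p then a.2 + p else a.2 - p)

lemma ex_le_one {Q : ℕ → Prop} : (∃ i, i ≤ 1 ∧ Q i) ↔ Q 0 ∨ Q 1 := by
  constructor
  · rintro ⟨i, hi, hQ⟩
    interval_cases i
    · exact Or.inl hQ
    · exact Or.inr hQ
  · rintro (h | h)
    · exact ⟨0, by omega, h⟩
    · exact ⟨1, by omega, h⟩

lemma ex_le_zero {Q : ℕ → Prop} : (∃ i, i ≤ 0 ∧ Q i) ↔ Q 0 := by
  constructor
  · rintro ⟨i, hi, hQ⟩
    interval_cases i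
    exact hQ
  · intro h; exact ⟨0, le_refl _, h⟩

lemma residue_eq2 {P n : ℕ} (hP : 1 ≤ P) (h1 : 1 ≤ n) (h2 : n ≤ 2 * P + 1) :
    residue P n = if n ≤ P then n else if n ≤ 2 * P then n - P else 1 := by
  unfold residue
  split_ifs with hA hB
  · rw [Nat.mod_eq_of_lt (by omega)]; omega
  · rw [Nat.mod_eq_sub_mod (by omega), Nat.mod_eq_of_lt (by omega)]; omega
  · have hn : n = 2 * P + 1 := by omega
    subst hn
    rw [show 2 * P + 1 - 1 = P * 2 from by omega, Nat.mul_mod_right]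

lemma residue_bounds {P n : ℕ} (hP : 1 ≤ P) : 1 ≤ residue P n ∧ residue P n ≤ P := by
  unfold residue
  have := Nat.mod_lt (n - 1) (show 0 < P by omega)
  omega

lemma rhoCyl_eval {p a b : ℕ} (hp : 1 ≤ p) (h1 : 1 ≤ b) (h2 : b ≤ 2 * p + 1) :
    rhoCyl (2 * p) (a, b) = (a, if b ≤ 2 * p then b else 1) := by
  unfold rhoCyl
  have e : residue (2 * p) b = if b ≤ 2 * p then b else if b ≤ 2 * (2 * p) then b - 2 * p else 1 :=
    residue_eq2 (by omega) h1 (by omega)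
  rw [e]
  split_ifs <;> rw [Prod.mk.injEq] <;> constructor <;> omega

lemma rhoMob_eval {h p a b : ℕ} (hp : 1 ≤ p) (h1 : 1 ≤ b) (h2 : b ≤ 2 * p + 1) :
    rhoMob h p (a, b) =
      if b ≤ p then (a, b) else if b ≤ 2 * p then (h + 1 - a, b - p) else (a, 1) := by
  unfold rhoMob
  have e1 : residue (2 * p) b = if b ≤ 2 * p then b else if b ≤ 2 * (2 * p) then b - 2 * p else 1 :=
    residue_eq2 (by omega) h1 (by omega)
  have e2 : residue p b = if b ≤ p then b else if b ≤ 2 * p then b - p else 1 :=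
    residue_eq2 hp h1 h2
  rw [e1, e2]
  split_ifs <;> rw [Prod.mk.injEq] <;> constructor <;> omega

lemma kb_one {b : Bool} (hb : 1 ≤ kb b) : b = true := by
  cases b
  · simp [kb] at hb
  · rfl

lemma bool_le_kb (b c : Bool) : b ≤ c ↔ kb b ≤ kb c := by cases b <;> cases c <;> decide

lemma mem_stripCell {ρ : ℕ × ℕ → ℕ × ℕ} {s : ℕ × ℕ} {k : Bool × Bool} {a : ℕ × ℕ} :
    a ∈ stripCell ρ s k ↔ ∃ i, i ≤ kb k.1 ∧ ∃ j, j ≤ kb k.2 ∧ a = ρ (s.1 + i, s.2 + j) := by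
  simp only [stripCell, Finset.mem_image, Finset.mem_filter, Finset.mem_univ, true_and]
  constructor
  · rintro ⟨b, ⟨hb1, hb2⟩, rfl⟩
    exact ⟨kb b.1, (bool_le_kb _ _).mp hb1, kb b.2, (bool_le_kb _ _).mp hb2, rfl⟩
  · rintro ⟨i, hi, j, hj, rfl⟩
    have hi1 : i = 0 ∨ i = 1 := by have := kb_le_one k.1; omega
    have hj1 : j = 0 ∨ j = 1 := by have := kb_le_one k.2; omega
    rcases hi1 with rfl | rfl <;> rcases hj1 with rfl | rfl
    · exact ⟨(false, false), ⟨Bool.false_le _, Bool.false_le _⟩, rfl⟩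
    · refine ⟨(false, true), ⟨Bool.false_le _, ?_⟩, rfl⟩
      rw [kb_one hj]
    · refine ⟨(true, false), ⟨?_, Bool.false_le _⟩, rfl⟩
      rw [kb_one hi]
    · refine ⟨(true, true), ⟨?_, ?_⟩, rfl⟩
      · rw [kb_one hi]
      · rw [kb_one hj]

/-- Membership in a cylinder cell, in purely arithmetic form. -/
lemma memC {p : ℕ} {z : ℕ × ℕ} {m : Bool × Bool} {a : ℕ × ℕ} (hp : 1 ≤ p)
    (hz1 : 1 ≤ z.2) (hz2 : z.2 ≤ 2 * p) :
    a ∈ stripCell (rhoCyl (2 * p)) z m ↔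
      ∃ i, i ≤ kb m.1 ∧ ∃ j, j ≤ kb m.2 ∧
        a.1 = z.1 + i ∧ a.2 = if z.2 + j ≤ 2 * p then z.2 + j else 1 := by
  rw [mem_stripCell]
  constructor
  · rintro ⟨i, hi, j, hj, rfl⟩
    refine ⟨i, hi, j, hj, ?_⟩
    rw [rhoCyl_eval hp (by omega) (by have := kb_le_one m.2; omega)]
    exact ⟨rfl, rfl⟩
  · rintro ⟨i, hi, j, hj, h1, h2⟩
    refine ⟨i, hi, j, hj, ?_⟩
    rw [rhoCyl_eval hp (by omega) (by have := kb_le_one m.2; omega)]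
    exact Prod.ext h1 h2

/-- Membership in a Möbius cell (with cylinder-range base point), arithmetic form. -/
lemma memM {h p : ℕ} {z : ℕ × ℕ} {m : Bool × Bool} {a : ℕ × ℕ} (hp : 1 ≤ p)
    (hz1 : 1 ≤ z.2) (hz2 : z.2 ≤ 2 * p) :
    a ∈ stripCell (rhoMob h p) z m ↔
      ∃ i, i ≤ kb m.1 ∧ ∃ j, j ≤ kb m.2 ∧
        a.1 = (if z.2 + j ≤ p then z.1 + i else if z.2 + j ≤ 2 * p then h + 1 - (z.1 + i) else z.1 + i) ∧
        a.2 = (if z.2 + j ≤ p then z.2 + j else if z.2 + j ≤ 2 * p then z.2 + j - p else 1) := by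
  rw [mem_stripCell]
  constructor
  · rintro ⟨i, hi, j, hj, rfl⟩
    refine ⟨i, hi, j, hj, ?_⟩
    rw [rhoMob_eval hp (by omega) (by have := kb_le_one m.2; omega)]
    split_ifs <;> simp
  · rintro ⟨i, hi, j, hj, h1, h2⟩
    refine ⟨i, hi, j, hj, ?_⟩
    rw [rhoMob_eval hp (by omega) (by have := kb_le_one m.2; omega)]
    split_ifs at h1 h2 ⊢ <;> (exact Prod.ext h1 h2)

/-- A valid representation of a cylinder cell of `Cyl_{h,2p}`. -/
def CRep (h p : ℕ) (s : ℕ × ℕ) (k : Bool × Bool) : Prop :=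
  1 ≤ s.1 ∧ s.1 + kb k.1 ≤ h ∧ 1 ≤ s.2 ∧ s.2 ≤ 2 * p

/-- A valid representation of a Möbius cell of `Möb_{h,p}`. -/
def MRep (h p : ℕ) (s : ℕ × ℕ) (k : Bool × Bool) : Prop :=
  1 ≤ s.1 ∧ s.1 + kb k.1 ≤ h ∧ 1 ≤ s.2 ∧ s.2 ≤ p

lemma MRep.toCRep {h p : ℕ} {s : ℕ × ℕ} {k : Bool × Bool} (hm : MRep h p s k) :
    CRep h p s k := by unfold MRep at hm; unfold CRep; omega

lemma mem_grid_mk {h P u v : ℕ} :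
    (u, v) ∈ gridNodes h P ↔ 1 ≤ u ∧ u ≤ h ∧ 1 ≤ v ∧ v ≤ P := Iff.rfl

lemma addK_eq (s : ℕ × ℕ) (k : Bool × Bool) : addK s k = (s.1 + kb k.1, s.2 + kb k.2) := rfl

lemma dagS_fst {h p : ℕ} (s : ℕ × ℕ) (k : Bool × Bool) :
    (dagS h p s k).1 = h + 1 - s.1 - kb k.1 := rfl

lemma dagS_snd {h p : ℕ} (s : ℕ × ℕ) (k : Bool × Bool) :
    (dagS h p s k).2 = if s.2 ≤ p then s.2 + p else s.2 - p := rfl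

lemma tauN_fst {h p : ℕ} (a : ℕ × ℕ) : (tauN h p a).1 = h + 1 - a.1 := rfl

lemma tauN_snd {h p : ℕ} (a : ℕ × ℕ) :
    (tauN h p a).2 = if a.2 ≤ p then a.2 + p else a.2 - p := rfl

lemma cells_cyl {h p : ℕ} {x : Finset (ℕ × ℕ)} (hp : 1 ≤ p) :
    x ∈ (cylPre h (2 * p)).cells ↔
      ∃ s k, CRep h p s k ∧ x = stripCell (rhoCyl (2 * p)) s k := by
  constructor
  · rintro ⟨s, hs, k, hk, rfl⟩
    refine ⟨s, k, ?_, rfl⟩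
    have hs' : 1 ≤ s.1 ∧ s.1 ≤ h ∧ 1 ≤ s.2 ∧ s.2 ≤ 2 * p := hs
    have hkb2 := kb_le_one k.2
    rw [addK_eq, rhoCyl_eval hp (by omega) (by omega)] at hk
    have hk' : 1 ≤ s.1 + kb k.1 ∧ s.1 + kb k.1 ≤ h ∧
        1 ≤ (if s.2 + kb k.2 ≤ 2 * p then s.2 + kb k.2 else 1) ∧
        (if s.2 + kb k.2 ≤ 2 * p then s.2 + kb k.2 else 1) ≤ 2 * p := hk
    unfold CRep
    omega
  · rintro ⟨s, k, hs, rfl⟩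
    obtain ⟨c1, c2, c3, c4⟩ := hs
    have hkb2 := kb_le_one k.2
    refine ⟨s, ⟨by omega, by omega, by omega, by omega⟩, k, ?_, rfl⟩
    rw [addK_eq, rhoCyl_eval hp (by omega) (by omega)]
    exact ⟨by omega, by omega, by split_ifs <;> omega, by split_ifs <;> omega⟩

lemma cells_mob {h p : ℕ} {x : Finset (ℕ × ℕ)} (hp : 1 ≤ p) :
    x ∈ (mobPre h p).cells ↔
      ∃ s k, MRep h p s k ∧ x = stripCell (rhoMob h p) s k := by
  constructor
  · rintro ⟨s, hs, k, hk, rfl⟩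
    refine ⟨s, k, ?_, rfl⟩
    have hs' : 1 ≤ s.1 ∧ s.1 ≤ h ∧ 1 ≤ s.2 ∧ s.2 ≤ p := hs
    have hkb2 := kb_le_one k.2
    rw [addK_eq, rhoMob_eval hp (by omega) (by omega)] at hk
    unfold MRep
    split_ifs at hk with h1 h2
    · have : 1 ≤ s.1 + kb k.1 ∧ s.1 + kb k.1 ≤ h ∧ 1 ≤ s.2 + kb k.2 ∧ s.2 + kb k.2 ≤ p := hk
      omega
    · have : 1 ≤ h + 1 - (s.1 + kb k.1) ∧ h + 1 - (s.1 + kb k.1) ≤ h ∧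
          1 ≤ s.2 + kb k.2 - p ∧ s.2 + kb k.2 - p ≤ p := hk
      omega
    · omega
  · rintro ⟨s, k, hs, rfl⟩
    obtain ⟨c1, c2, c3, c4⟩ := hs
    have hkb2 := kb_le_one k.2
    refine ⟨s, ⟨by omega, by omega, by omega, by omega⟩, k, ?_, rfl⟩
    rw [addK_eq, rhoMob_eval hp (by omega) (by omega)]
    split_ifs <;>
      exact ⟨by omega, by omega, by omega, by omega⟩

lemma base_mem_c {h p : ℕ} {s : ℕ × ℕ} {k : Bool × Bool} (hp : 1 ≤ p)
    (hs : CRep h p s k) : s ∈ stripCell (rhoCyl (2 * p)) s k := by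
  obtain ⟨c1, c2, c3, c4⟩ := hs
  rw [memC hp c3 c4]
  exact ⟨0, Nat.zero_le _, 0, Nat.zero_le _, by omega, by split_ifs <;> omega⟩

lemma col_of_mem {h p : ℕ} {s u : ℕ × ℕ} {k : Bool × Bool} (hp : 1 ≤ p)
    (hs : CRep h p s k) (hu : u ∈ stripCell (rhoCyl (2 * p)) s k) :
    ∃ c ≤ 1, u.2 = if s.2 + c ≤ 2 * p then s.2 + c else 1 := by
  obtain ⟨c1, c2, c3, c4⟩ := hs
  rw [memC hp c3 c4] at hu
  obtain ⟨i, hi, j, hj, h1, h2⟩ := hu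
  exact ⟨j, by have := kb_le_one k.2; omega, h2⟩

lemma bounds_of_mem {h p : ℕ} {s u : ℕ × ℕ} {k : Bool × Bool} (hp : 1 ≤ p)
    (hs : CRep h p s k) (hu : u ∈ stripCell (rhoCyl (2 * p)) s k) :
    1 ≤ u.1 ∧ u.1 ≤ h ∧ 1 ≤ u.2 ∧ u.2 ≤ 2 * p := by
  obtain ⟨c1, c2, c3, c4⟩ := hs
  rw [memC hp c3 c4] at hu
  obtain ⟨i, hi, j, hj, h1, h2⟩ := hu
  have := kb_le_one k.1
  constructor
  · omega
  constructor
  · omega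
  split_ifs at h2 <;> omega

lemma dag_CRep {h p : ℕ} {s : ℕ × ℕ} {k : Bool × Bool} (hp : 1 ≤ p)
    (hs : CRep h p s k) : CRep h p (dagS h p s k) k := by
  obtain ⟨c1, c2, c3, c4⟩ := hs
  unfold CRep
  rw [dagS_fst, dagS_snd]
  split_ifs <;> omega

lemma dag_dag {h p : ℕ} {s : ℕ × ℕ} {k : Bool × Bool} (hp : 1 ≤ p)
    (hs : CRep h p s k) : dagS h p (dagS h p s k) k = s := by
  obtain ⟨c1, c2, c3, c4⟩ := hs
  simp only [Prod.ext_iff, dagS_fst, dagS_snd]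
  constructor
  · omega
  · split_ifs <;> omega

lemma tau_mem {h p : ℕ} {s a : ℕ × ℕ} {k : Bool × Bool} (hp : 1 ≤ p)
    (hs : CRep h p s k) (ha : a ∈ stripCell (rhoCyl (2 * p)) s k) :
    tauN h p a ∈ stripCell (rhoCyl (2 * p)) (dagS h p s k) k := by
  obtain ⟨c1, c2, c3, c4⟩ := hs
  rw [memC hp c3 c4] at ha
  obtain ⟨i, hi, j, hj, h1, h2⟩ := ha
  have hk1 := kb_le_one k.1
  have hk2 := kb_le_one k.2
  rw [memC hp (by rw [dagS_snd]; split_ifs <;> omega) (by rw [dagS_snd]; split_ifs <;> omega)]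
  refine ⟨kb k.1 - i, by omega, j, hj, ?_, ?_⟩
  · rw [tauN_fst, dagS_fst]; omega
  · rw [tauN_snd, dagS_snd]
    split_ifs at h2 ⊢ <;> omega

lemma tau_invol {h p : ℕ} {a : ℕ × ℕ} (hp : 1 ≤ p) (h1 : 1 ≤ a.1) (h2 : a.1 ≤ h)
    (h3 : 1 ≤ a.2) (h4 : a.2 ≤ 2 * p) : tauN h p (tauN h p a) = a := by
  simp only [Prod.ext_iff, tauN_fst, tauN_snd]
  constructor
  · omega
  · split_ifs <;> omega

lemma rho_comp {h p a b : ℕ} (hp : 1 ≤ p) (h1 : 1 ≤ b) (h2 : b ≤ 2 * p + 1) :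
    rhoMob h p (rhoCyl (2 * p) (a, b)) = rhoMob h p (a, b) := by
  rw [rhoCyl_eval hp h1 h2]
  split_ifs with hb
  · rfl
  · rw [rhoMob_eval hp (by omega) (by omega), rhoMob_eval hp h1 h2]
    split_ifs <;> rw [Prod.mk.injEq] <;> constructor <;> omega

lemma img_cell {h p : ℕ} {s : ℕ × ℕ} {k : Bool × Bool} (hp : 1 ≤ p)
    (hs : CRep h p s k) :
    (stripCell (rhoCyl (2 * p)) s k).image (rhoMob h p) = stripCell (rhoMob h p) s k := by
  obtain ⟨c1, c2, c3, c4⟩ := hs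
  have hk2 := kb_le_one k.2
  ext a
  simp only [Finset.mem_image]
  constructor
  · rintro ⟨b, hb, rfl⟩
    rw [mem_stripCell] at hb
    obtain ⟨i, hi, j, hj, rfl⟩ := hb
    rw [rho_comp hp (by omega) (by omega), mem_stripCell]
    exact ⟨i, hi, j, hj, rfl⟩
  · rw [mem_stripCell]
    rintro ⟨i, hi, j, hj, rfl⟩
    refine ⟨rhoCyl (2 * p) (s.1 + i, s.2 + j), ?_, ?_⟩
    · rw [mem_stripCell]; exact ⟨i, hi, j, hj, rfl⟩
    · rw [rho_comp hp (by omega) (by omega)]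

lemma clashB {p : ℕ} (hp : 3 ≤ p) {s2 t2 v2 u2 c1 c2 b1 b2 : ℕ}
    (hs1 : 1 ≤ s2) (hs2 : s2 ≤ 2 * p) (ht1 : 1 ≤ t2) (ht2 : t2 ≤ 2 * p)
    (hc1 : c1 ≤ 1) (hc2 : c2 ≤ 1) (hb1 : b1 ≤ 1) (hb2 : b2 ≤ 1)
    (e1 : v2 = if s2 + c1 ≤ 2 * p then s2 + c1 else 1)
    (e2 : v2 = if t2 + b1 ≤ 2 * p then t2 + b1 else 1)
    (e3 : u2 = if s2 + c2 ≤ 2 * p then s2 + c2 else 1)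
    (e4 : u2 = if (if t2 ≤ p then t2 + p else t2 - p) + b2 ≤ 2 * p then
        (if t2 ≤ p then t2 + p else t2 - p) + b2 else 1) : False := by
  split_ifs at * <;> omega

lemma clashA {p : ℕ} (hp : 3 ≤ p) {t2 z2 z2' u2 c c' d d' : ℕ}
    (ht1 : 1 ≤ t2) (ht2 : t2 ≤ 2 * p) (hz1 : 1 ≤ z2) (hz2 : z2 ≤ 2 * p)
    (hz1' : 1 ≤ z2') (hz2' : z2' ≤ 2 * p)
    (hc : c ≤ 1) (hc' : c' ≤ 1) (hd : d ≤ 1) (hd' : d' ≤ 1)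
    (e1 : t2 = if z2 + c' ≤ 2 * p then z2 + c' else 1)
    (e2 : u2 = if z2 + c ≤ 2 * p then z2 + c else 1)
    (e3 : u2 = if z2' + d ≤ 2 * p then z2' + d else 1)
    (e4 : (if t2 ≤ p then t2 + p else t2 - p) = if z2' + d' ≤ 2 * p then z2' + d' else 1) :
    False := by
  split_ifs at * <;> omega

@[simp] lemma kb_true : kb true = 1 := rfl
@[simp] lemma kb_false : kb false = 0 := rfl

lemma corner_mem_c {p : ℕ} {z : ℕ × ℕ} {m : Bool × Bool} {i j : ℕ} (hp : 1 ≤ p)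
    (hz1 : 1 ≤ z.2) (hz2 : z.2 ≤ 2 * p) (hi : i ≤ kb m.1) (hj : j ≤ kb m.2) :
    ((z.1 + i, if z.2 + j ≤ 2 * p then z.2 + j else 1) : ℕ × ℕ) ∈
      stripCell (rhoCyl (2 * p)) z m :=
  (memC hp hz1 hz2).mpr ⟨i, hi, j, hj, rfl, rfl⟩

/-- Uniqueness of representations of cylinder cells. -/
lemma Ucyl {h p : ℕ} {s t : ℕ × ℕ} {k l : Bool × Bool} (hp : 3 ≤ p)
    (hs : CRep h p s k) (ht : CRep h p t l)
    (hEq : stripCell (rhoCyl (2 * p)) s k = stripCell (rhoCyl (2 * p)) t l) :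
    s = t ∧ kb k.1 = kb l.1 ∧ kb k.2 = kb l.2 := by
  obtain ⟨a1, a2, a3, a4⟩ := hs
  obtain ⟨b1, b2, b3, b4⟩ := ht
  have H := Finset.ext_iff.mp hEq
  have A00 := (memC (show 1 ≤ p by omega) b3 b4).mp
    ((H _).mp (corner_mem_c (by omega) a3 a4 (Nat.zero_le _) (Nat.zero_le _)))
  have A10 := (memC (show 1 ≤ p by omega) b3 b4).mp
    ((H _).mp (corner_mem_c (by omega) a3 a4 (le_refl _) (Nat.zero_le _)))
  have A01 := (memC (show 1 ≤ p by omega) b3 b4).mp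
    ((H _).mp (corner_mem_c (by omega) a3 a4 (Nat.zero_le _) (le_refl _)))
  have A11 := (memC (show 1 ≤ p by omega) b3 b4).mp
    ((H _).mp (corner_mem_c (by omega) a3 a4 (le_refl _) (le_refl _)))
  have B00 := (memC (show 1 ≤ p by omega) a3 a4).mp
    ((H _).mpr (corner_mem_c (by omega) b3 b4 (Nat.zero_le _) (Nat.zero_le _)))
  have B11 := (memC (show 1 ≤ p by omega) a3 a4).mp
    ((H _).mpr (corner_mem_c (by omega) b3 b4 (le_refl _) (le_refl _)))
  obtain ⟨s1, s2⟩ := s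
  obtain ⟨t1, t2⟩ := t
  obtain ⟨k1, k2⟩ := k
  obtain ⟨l1, l2⟩ := l
  rw [Prod.mk.injEq]
  cases k1 <;> cases k2 <;> cases l1 <;> cases l2 <;>
    (simp only [kb_true, kb_false, and_true, true_and, and_false, false_and] at A00 A10 A01 A11 B00 B11 a1 a2 a3 a4 b1 b2 b3 b4 ⊢
     simp only [ex_le_one, ex_le_zero] at A00 A10 A01 A11 B00 B11
     split_ifs at A00 A10 A01 A11 B00 B11 <;> grind)

/-- Fibers of the Möbius node map over the cylinder grid. -/
lemma fiber {h p : ℕ} {a b : ℕ × ℕ} (hp : 3 ≤ p)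
    (ha1 : 1 ≤ a.1) (ha2 : a.1 ≤ h) (ha3 : 1 ≤ a.2) (ha4 : a.2 ≤ 2 * p)
    (hb1 : 1 ≤ b.1) (hb2 : b.1 ≤ h) (hb3 : 1 ≤ b.2) (hb4 : b.2 ≤ 2 * p)
    (hEq : rhoMob h p a = rhoMob h p b) : b = a ∨ b = tauN h p a := by
  obtain ⟨x1, x2⟩ := a
  obtain ⟨y1, y2⟩ := b
  simp only at ha1 ha2 ha3 ha4 hb1 hb2 hb3 hb4
  rw [rhoMob_eval (by omega) (by omega) (by omega),
    rhoMob_eval (by omega) (by omega) (by omega)] at hEq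
  rw [show tauN h p (x1, x2) = (h + 1 - x1, if x2 ≤ p then x2 + p else x2 - p) from rfl]
  split_ifs at hEq ⊢ <;> simp only [Prod.mk.injEq] at hEq ⊢ <;> omega

lemma stripRank_eq (k : Bool × Bool) : stripRank k = kb k.1 + kb k.2 := rfl

lemma noSelfSub {h p : ℕ} {s : ℕ × ℕ} {k : Bool × Bool} (hp : 3 ≤ p) (hs : CRep h p s k)
    (hsub : stripCell (rhoCyl (2 * p)) s k ⊆ stripCell (rhoCyl (2 * p)) (dagS h p s k) k) :
    False := by
  have hb := hsub (base_mem_c (by omega) hs)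
  obtain ⟨c, hc, ec⟩ := col_of_mem (by omega) (dag_CRep (by omega) hs) hb
  rw [dagS_snd] at ec
  obtain ⟨a1, a2, a3, a4⟩ := hs
  split_ifs at ec <;> omega

lemma rho_tau {h p : ℕ} {a : ℕ × ℕ} (hp : 1 ≤ p) (h1 : 1 ≤ a.1) (h2 : a.1 ≤ h)
    (h3 : 1 ≤ a.2) (h4 : a.2 ≤ 2 * p) :
    rhoMob h p (tauN h p a) = rhoMob h p a := by
  obtain ⟨x1, x2⟩ := a
  simp only at h1 h2 h3 h4
  rw [show tauN h p (x1, x2) = (h + 1 - x1, if x2 ≤ p then x2 + p else x2 - p) from rfl]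
  by_cases hx : x2 ≤ p
  · rw [if_pos hx, rhoMob_eval hp (by omega) (by omega), rhoMob_eval hp (by omega) (by omega)]
    split_ifs <;> rw [Prod.mk.injEq] <;> constructor <;> omega
  · rw [if_neg hx, rhoMob_eval hp (by omega) (by omega), rhoMob_eval hp (by omega) (by omega)]
    split_ifs <;> rw [Prod.mk.injEq] <;> constructor <;> omega

/-- The main lifting lemma: an inclusion between Möbius cells lifts coherently
to the two cylinder lifts. -/
lemma liftSub {h p : ℕ} {s t : ℕ × ℕ} {k l : Bool × Bool} (hp : 3 ≤ p)
    (hs : CRep h p s k) (ht : CRep h p t l)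
    (hsub : stripCell (rhoMob h p) s k ⊆ stripCell (rhoMob h p) t l) :
    (stripCell (rhoCyl (2 * p)) s k ⊆ stripCell (rhoCyl (2 * p)) t l ∧
      stripCell (rhoCyl (2 * p)) (dagS h p s k) k ⊆
        stripCell (rhoCyl (2 * p)) (dagS h p t l) l) ∨
    (stripCell (rhoCyl (2 * p)) s k ⊆ stripCell (rhoCyl (2 * p)) (dagS h p t l) l ∧
      stripCell (rhoCyl (2 * p)) (dagS h p s k) k ⊆ stripCell (rhoCyl (2 * p)) t l) := by
  have hp1 : 1 ≤ p := by omega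
  have hds := dag_CRep hp1 hs
  have hdt := dag_CRep hp1 ht
  have key : ∀ u ∈ stripCell (rhoCyl (2 * p)) s k,
      u ∈ stripCell (rhoCyl (2 * p)) t l ∨
      u ∈ stripCell (rhoCyl (2 * p)) (dagS h p t l) l := by
    intro u hu
    have hmem : rhoMob h p u ∈ stripCell (rhoMob h p) t l := by
      apply hsub
      rw [← img_cell hp1 hs]
      exact Finset.mem_image_of_mem _ hu
    rw [← img_cell hp1 ht] at hmem
    obtain ⟨v, hv, hveq⟩ := Finset.mem_image.mp hmem
    obtain ⟨u1, u2, u3, u4⟩ := bounds_of_mem hp1 hs hu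
    obtain ⟨v1, v2, v3, v4⟩ := bounds_of_mem hp1 ht hv
    rcases fiber hp v1 v2 v3 v4 u1 u2 u3 u4 hveq with rfl | he
    · exact Or.inl hv
    · rw [he]
      exact Or.inr (tau_mem hp1 ht hv)
  have hbase := base_mem_c hp1 hs
  have hsC := hs
  have htC := ht
  obtain ⟨sa, sb, sc, sd⟩ := hsC
  obtain ⟨ta, tb, tc, td⟩ := htC
  rcases key s hbase with hB | hBd
  · left
    have hXB : stripCell (rhoCyl (2 * p)) s k ⊆ stripCell (rhoCyl (2 * p)) t l := by
      intro u hu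
      rcases key u hu with h1 | h2
      · exact h1
      · exfalso
        obtain ⟨cs, hcs, ecs⟩ := col_of_mem hp1 ht hB
        obtain ⟨cu, hcu, ecu⟩ := col_of_mem hp1 hdt h2
        obtain ⟨cx, hcx, ecx⟩ := col_of_mem hp1 hs hu
        rw [dagS_snd] at ecu
        have e0 : s.2 = if s.2 + 0 ≤ 2 * p then s.2 + 0 else 1 := by split_ifs <;> omega
        exact clashB hp sc sd tc td (by omega) hcx hcs hcu e0 ecs ecx ecu
    refine ⟨hXB, ?_⟩
    intro a' ha'
    have h1 : tauN h p a' ∈ stripCell (rhoCyl (2 * p)) s k := by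
      have h2 := tau_mem hp1 hds ha'
      rwa [dag_dag hp1 hs] at h2
    have h3 := tau_mem hp1 ht (hXB h1)
    obtain ⟨w1, w2, w3, w4⟩ := bounds_of_mem hp1 hds ha'
    rwa [tau_invol hp1 w1 w2 w3 w4] at h3
  · right
    have hXBd : stripCell (rhoCyl (2 * p)) s k ⊆
        stripCell (rhoCyl (2 * p)) (dagS h p t l) l := by
      intro u hu
      rcases key u hu with h1 | h2
      · exfalso
        obtain ⟨cs, hcs, ecs⟩ := col_of_mem hp1 hdt hBd
        obtain ⟨cu, hcu, ecu⟩ := col_of_mem hp1 ht h1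
        obtain ⟨cx, hcx, ecx⟩ := col_of_mem hp1 hs hu
        rw [dagS_snd] at ecs
        have e0 : s.2 = if s.2 + 0 ≤ 2 * p then s.2 + 0 else 1 := by split_ifs <;> omega
        exact clashB hp sc sd tc td hcx (by omega) hcu hcs ecx ecu e0 ecs
      · exact h2
    refine ⟨hXBd, ?_⟩
    intro a' ha'
    have h1 : tauN h p a' ∈ stripCell (rhoCyl (2 * p)) s k := by
      have h2 := tau_mem hp1 hds ha'
      rwa [dag_dag hp1 hs] at h2
    have h3 := tau_mem hp1 hdt (hXBd h1)
    rw [dag_dag hp1 ht] at h3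
    obtain ⟨w1, w2, w3, w4⟩ := bounds_of_mem hp1 hds ha'
    rwa [tau_invol hp1 w1 w2 w3 w4] at h3

/-- Injectivity dichotomy: two cylinder cells with the same Möbius image. -/
lemma cellm_inj {h p : ℕ} {t t' : ℕ × ℕ} {l l' : Bool × Bool} (hp : 3 ≤ p)
    (ht : CRep h p t l) (ht' : CRep h p t' l')
    (hEq : stripCell (rhoMob h p) t l = stripCell (rhoMob h p) t' l') :
    stripCell (rhoCyl (2 * p)) t' l' = stripCell (rhoCyl (2 * p)) t l ∨
      stripCell (rhoCyl (2 * p)) t' l' = stripCell (rhoCyl (2 * p)) (dagS h p t l) l := by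
  have hsub1 : stripCell (rhoMob h p) t l ⊆ stripCell (rhoMob h p) t' l' := by rw [hEq]
  have hsub2 : stripCell (rhoMob h p) t' l' ⊆ stripCell (rhoMob h p) t l := by rw [hEq]
  rcases liftSub hp ht ht' hsub1 with ⟨h1, h2⟩ | ⟨h1, h2⟩ <;>
    rcases liftSub hp ht' ht hsub2 with ⟨g1, g2⟩ | ⟨g1, g2⟩
  · exact Or.inl (Finset.Subset.antisymm g1 h1)
  · exact (noSelfSub hp ht (h1.trans g1)).elim
  · exact (noSelfSub hp ht' (g1.trans h1)).elim
  · exact Or.inr (Finset.Subset.antisymm g1 h2)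

lemma dag_MRep {h p : ℕ} {s : ℕ × ℕ} {k : Bool × Bool} (hp : 1 ≤ p)
    (hs : CRep h p s k) (hcol : ¬ s.2 ≤ p) : MRep h p (dagS h p s k) k := by
  obtain ⟨a, b, c, d⟩ := hs
  have := kb_le_one k.1
  unfold MRep
  rw [dagS_fst, dagS_snd]
  split_ifs <;> omega

lemma mrefl {h p : ℕ} {s : ℕ × ℕ} {k : Bool × Bool} (hp : 3 ≤ p) (hs : CRep h p s k) :
    stripCell (rhoMob h p) (dagS h p s k) k = stripCell (rhoMob h p) s k := by
  have hp1 : 1 ≤ p := by omega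
  have hds := dag_CRep hp1 hs
  rw [← img_cell hp1 hds, ← img_cell hp1 hs]
  ext a
  simp only [Finset.mem_image]
  constructor
  · rintro ⟨b, hb, rfl⟩
    obtain ⟨w1, w2, w3, w4⟩ := bounds_of_mem hp1 hds hb
    refine ⟨tauN h p b, ?_, ?_⟩
    · have h2 := tau_mem hp1 hds hb
      rwa [dag_dag hp1 hs] at h2
    · exact rho_tau hp1 w1 w2 w3 w4
  · rintro ⟨b, hb, rfl⟩
    obtain ⟨w1, w2, w3, w4⟩ := bounds_of_mem hp1 hs hb
    exact ⟨tauN h p b, tau_mem hp1 hs hb, rho_tau hp1 w1 w2 w3 w4⟩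

lemma CRep_valid {h p : ℕ} {s : ℕ × ℕ} {k : Bool × Bool} (hp : 1 ≤ p) (hs : CRep h p s k) :
    s ∈ gridNodes h (2 * p) ∧ rhoCyl (2 * p) (addK s k) ∈ gridNodes h (2 * p) := by
  obtain ⟨c1, c2, c3, c4⟩ := hs
  have hkb2 := kb_le_one k.2
  refine ⟨⟨by omega, by omega, by omega, by omega⟩, ?_⟩
  rw [addK_eq, rhoCyl_eval hp (by omega) (by omega)]
  exact ⟨by omega, by omega, by split_ifs <;> omega, by split_ifs <;> omega⟩

lemma valid_CRep {h p : ℕ} {s : ℕ × ℕ} {k : Bool × Bool} (hp : 1 ≤ p)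
    (hg : s ∈ gridNodes h (2 * p))
    (hv : rhoCyl (2 * p) (addK s k) ∈ gridNodes h (2 * p)) : CRep h p s k := by
  have hs' : 1 ≤ s.1 ∧ s.1 ≤ h ∧ 1 ≤ s.2 ∧ s.2 ≤ 2 * p := hg
  have hkb2 := kb_le_one k.2
  rw [addK_eq, rhoCyl_eval hp (by omega) (by omega)] at hv
  have hk' : 1 ≤ s.1 + kb k.1 ∧ s.1 + kb k.1 ≤ h ∧
      1 ≤ (if s.2 + kb k.2 ≤ 2 * p then s.2 + kb k.2 else 1) ∧
      (if s.2 + kb k.2 ≤ 2 * p then s.2 + kb k.2 else 1) ≤ 2 * p := hv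
  unfold CRep
  omega

lemma MRep_valid {h p : ℕ} {s : ℕ × ℕ} {k : Bool × Bool} (hp : 1 ≤ p) (hs : MRep h p s k) :
    s ∈ gridNodes h p ∧ rhoMob h p (addK s k) ∈ gridNodes h p := by
  obtain ⟨c1, c2, c3, c4⟩ := hs
  have hkb2 := kb_le_one k.2
  refine ⟨⟨by omega, by omega, by omega, by omega⟩, ?_⟩
  rw [addK_eq, rhoMob_eval hp (by omega) (by omega)]
  split_ifs <;> exact ⟨by omega, by omega, by omega, by omega⟩

lemma valid_MRep {h p : ℕ} {s : ℕ × ℕ} {k : Bool × Bool} (hp : 1 ≤ p)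
    (hg : s ∈ gridNodes h p)
    (hv : rhoMob h p (addK s k) ∈ gridNodes h p) : MRep h p s k := by
  have hs' : 1 ≤ s.1 ∧ s.1 ≤ h ∧ 1 ≤ s.2 ∧ s.2 ≤ p := hg
  have hkb2 := kb_le_one k.2
  rw [addK_eq, rhoMob_eval hp (by omega) (by omega)] at hv
  unfold MRep
  split_ifs at hv with h1 h2
  · have : 1 ≤ s.1 + kb k.1 ∧ s.1 + kb k.1 ≤ h ∧ 1 ≤ s.2 + kb k.2 ∧ s.2 + kb k.2 ≤ p := hv
    omega
  · have : 1 ≤ h + 1 - (s.1 + kb k.1) ∧ h + 1 - (s.1 + kb k.1) ≤ h ∧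
        1 ≤ s.2 + kb k.2 - p ∧ s.2 + kb k.2 - p ≤ p := hv
    omega
  · omega

lemma rk_cyl {h p : ℕ} {s : ℕ × ℕ} {k : Bool × Bool} (hp : 3 ≤ p) (hs : CRep h p s k) :
    (cylPre h (2 * p)).rk (stripCell (rhoCyl (2 * p)) s k) = stripRank k := by
  have hp1 : 1 ≤ p := by omega
  show sInf {r | ∃ s' ∈ gridNodes h (2 * p), ∃ k' : Bool × Bool,
      rhoCyl (2 * p) (addK s' k') ∈ gridNodes h (2 * p) ∧
      stripCell (rhoCyl (2 * p)) s k = stripCell (rhoCyl (2 * p)) s' k' ∧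
      r = stripRank k'} = stripRank k
  have hne : Set.Nonempty {r | ∃ s' ∈ gridNodes h (2 * p), ∃ k' : Bool × Bool,
      rhoCyl (2 * p) (addK s' k') ∈ gridNodes h (2 * p) ∧
      stripCell (rhoCyl (2 * p)) s k = stripCell (rhoCyl (2 * p)) s' k' ∧
      r = stripRank k'} :=
    ⟨stripRank k, s, (CRep_valid hp1 hs).1, k, (CRep_valid hp1 hs).2, rfl, rfl⟩
  obtain ⟨s', hg, k', hv, he, hr⟩ := Nat.sInf_mem hne
  have hs' := valid_CRep hp1 hg hv
  obtain ⟨-, e1, e2⟩ := Ucyl hp hs hs' he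
  rw [hr, stripRank_eq, stripRank_eq]
  omega

lemma rk_mob {h p : ℕ} {s : ℕ × ℕ} {k : Bool × Bool} (hp : 3 ≤ p) (hs : CRep h p s k) :
    (mobPre h p).rk (stripCell (rhoMob h p) s k) = stripRank k := by
  have hp1 : 1 ≤ p := by omega
  obtain ⟨w, hw, hwe⟩ : ∃ w, MRep h p w k ∧
      stripCell (rhoMob h p) w k = stripCell (rhoMob h p) s k := by
    by_cases hcol : s.2 ≤ p
    · exact ⟨s, ⟨hs.1, hs.2.1, hs.2.2.1, hcol⟩, rfl⟩
    · exact ⟨dagS h p s k, dag_MRep hp1 hs hcol, mrefl hp hs⟩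
  show sInf {r | ∃ s' ∈ gridNodes h p, ∃ k' : Bool × Bool,
      rhoMob h p (addK s' k') ∈ gridNodes h p ∧
      stripCell (rhoMob h p) s k = stripCell (rhoMob h p) s' k' ∧
      r = stripRank k'} = stripRank k
  have hne : Set.Nonempty {r | ∃ s' ∈ gridNodes h p, ∃ k' : Bool × Bool,
      rhoMob h p (addK s' k') ∈ gridNodes h p ∧
      stripCell (rhoMob h p) s k = stripCell (rhoMob h p) s' k' ∧
      r = stripRank k'} :=
    ⟨stripRank k, w, (MRep_valid hp1 hw).1, k, (MRep_valid hp1 hw).2, hwe.symm, rfl⟩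
  obtain ⟨s', hg, k', hv, he, hr⟩ := Nat.sInf_mem hne
  have hs' := (valid_MRep hp1 hg hv).toCRep
  rcases cellm_inj hp hs hs' he with hc | hc
  · obtain ⟨-, e1, e2⟩ := Ucyl hp hs' hs hc
    rw [hr, stripRank_eq, stripRank_eq]
    omega
  · obtain ⟨-, e1, e2⟩ := Ucyl hp hs' (dag_CRep hp1 hs) hc
    rw [hr, stripRank_eq, stripRank_eq]
    omega

lemma cellm_mem_cells {h p : ℕ} {s : ℕ × ℕ} {k : Bool × Bool} (hp : 3 ≤ p)
    (hs : CRep h p s k) : stripCell (rhoMob h p) s k ∈ (mobPre h p).cells := by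
  rw [cells_mob (show (1 : ℕ) ≤ p by omega)]
  by_cases hcol : s.2 ≤ p
  · exact ⟨s, k, ⟨hs.1, hs.2.1, hs.2.2.1, hcol⟩, rfl⟩
  · exact ⟨dagS h p s k, k, dag_MRep (by omega) hs hcol, (mrefl hp hs).symm⟩

lemma skel_cyl_iff {h p : ℕ} {s : ℕ × ℕ} {k : Bool × Bool} {r : ℕ} (hp : 3 ≤ p)
    (hs : CRep h p s k) :
    stripCell (rhoCyl (2 * p)) s k ∈ (cylPre h (2 * p)).skel r ↔ stripRank k = r := by
  constructor
  · rintro ⟨hc, hrk⟩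
    rw [← hrk, rk_cyl hp hs]
  · rintro rfl
    exact ⟨(cells_cyl (by omega)).mpr ⟨s, k, hs, rfl⟩, rk_cyl hp hs⟩

lemma skel_mob_iff {h p : ℕ} {s : ℕ × ℕ} {k : Bool × Bool} {r : ℕ} (hp : 3 ≤ p)
    (hs : CRep h p s k) :
    stripCell (rhoMob h p) s k ∈ (mobPre h p).skel r ↔ stripRank k = r := by
  constructor
  · rintro ⟨hc, hrk⟩
    rw [← hrk, rk_mob hp hs]
  · rintro rfl
    exact ⟨cellm_mem_cells hp hs, rk_mob hp hs⟩

/-- Extracting a representation from membership in a Möbius skeleton. -/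
lemma skel_mob_elim {h p : ℕ} {x : Finset (ℕ × ℕ)} {r : ℕ} (hp : 3 ≤ p)
    (hx : x ∈ (mobPre h p).skel r) :
    ∃ s k, CRep h p s k ∧ stripRank k = r ∧ x = stripCell (rhoMob h p) s k := by
  obtain ⟨hc, hrk⟩ := hx
  obtain ⟨s, k, hm, rfl⟩ := (cells_mob (show (1 : ℕ) ≤ p by omega)).mp hc
  exact ⟨s, k, hm.toCRep, by rw [← hrk, rk_mob hp hm.toCRep], rfl⟩

lemma skel_cyl_elim {h p : ℕ} {x : Finset (ℕ × ℕ)} {r : ℕ} (hp : 3 ≤ p)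
    (hx : x ∈ (cylPre h (2 * p)).skel r) :
    ∃ s k, CRep h p s k ∧ stripRank k = r ∧ x = stripCell (rhoCyl (2 * p)) s k := by
  obtain ⟨hc, hrk⟩ := hx
  obtain ⟨s, k, hs, rfl⟩ := (cells_cyl (show (1 : ℕ) ≤ p by omega)).mp hc
  exact ⟨s, k, hs, by rw [← hrk, rk_cyl hp hs], rfl⟩

/-- For `h, p ≥ 3`, the map on cells induced by the node map `ρ_möb^{h,p}`
(restricted to the nodes `[h] × [2p]`) is a CC covering of the Möbius strip
`Möb_{h,p}` by the cylinder `Cyl_{h,2p}`. -/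
theorem mob_covering (h p : ℕ) (hh : 3 ≤ h) (hp : 3 ≤ p) :
    IsCovering (cylPre h (2 * p)) (mobPre h p) (fun x => x.image (rhoMob h p)) := by
  have hp1 : (1 : ℕ) ≤ p := by omega
  refine ⟨?_, ?_, ?_, ?_⟩
  · -- mem
    intro x' hx'
    obtain ⟨s, k, hs, rfl⟩ := (cells_cyl hp1).mp hx'
    show (stripCell (rhoCyl (2 * p)) s k).image (rhoMob h p) ∈ (mobPre h p).cells
    rw [img_cell hp1 hs]
    exact cellm_mem_cells hp hs
  · -- surj
    intro x hx
    obtain ⟨s, k, hm, rfl⟩ := (cells_mob hp1).mp hx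
    exact ⟨stripCell (rhoCyl (2 * p)) s k, (cells_cyl hp1).mpr ⟨s, k, hm.toCRep, rfl⟩,
      img_cell hp1 hm.toCRep⟩
  · -- rank
    intro x' hx'
    obtain ⟨s, k, hs, rfl⟩ := (cells_cyl hp1).mp hx'
    show (mobPre h p).rk ((stripCell (rhoCyl (2 * p)) s k).image (rhoMob h p)) = _
    rw [img_cell hp1 hs, rk_mob hp hs, rk_cyl hp hs]
  · -- locBij
    intro x' hx' N
    obtain ⟨s, k, hs, rfl⟩ := (cells_cyl hp1).mp hx'
    rw [img_cell hp1 hs]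
    have hsx := base_mem_c hp1 hs
    rcases N with ⟨r1, r2⟩ | ⟨r1, r2⟩ | ⟨r1, r2⟩ | ⟨r1, r2⟩
    · -- adjacency
      simp only [PreCC.nbhd]
      refine ⟨?_, ?_, ?_⟩
      · rintro y' ⟨hm1, hm2, z', hz1, hz2, hz3⟩
        obtain ⟨t, l, ht, hrl, rfl⟩ := skel_cyl_elim hp hm2
        obtain ⟨w, m, hw, hrm, rfl⟩ := skel_cyl_elim hp hz1
        refine ⟨(skel_mob_iff hp hs).mpr ((skel_cyl_iff hp hs).mp hm1), ?_, ?_⟩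
        · show (stripCell (rhoCyl (2 * p)) t l).image (rhoMob h p) ∈ _
          rw [img_cell hp1 ht]
          exact (skel_mob_iff hp ht).mpr hrl
        · refine ⟨stripCell (rhoMob h p) w m, (skel_mob_iff hp hw).mpr hrm, ?_, ?_⟩
          · have h2 := Finset.image_subset_image (f := rhoMob h p) hz2
            rwa [img_cell hp1 hs, img_cell hp1 hw] at h2
          · show (stripCell (rhoCyl (2 * p)) t l).image (rhoMob h p) ⊆ _
            have h2 := Finset.image_subset_image (f := rhoMob h p) hz3
            rwa [img_cell hp1 hw] at h2
      · rintro y1 ⟨-, hm2, z1, hz1, hz2, hz3⟩ y2 ⟨-, hm2', z2, hz1', hz2', hz3'⟩ hIm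
        obtain ⟨t, l, ht, hrl, rfl⟩ := skel_cyl_elim hp hm2
        obtain ⟨t', l', ht', hrl', rfl⟩ := skel_cyl_elim hp hm2'
        obtain ⟨w, m, hw, hrm, rfl⟩ := skel_cyl_elim hp hz1
        obtain ⟨w', m', hw', hrm', rfl⟩ := skel_cyl_elim hp hz1'
        have hIm2 : (stripCell (rhoCyl (2 * p)) t l).image (rhoMob h p) =
            (stripCell (rhoCyl (2 * p)) t' l').image (rhoMob h p) := hIm
        rw [img_cell hp1 ht, img_cell hp1 ht'] at hIm2
        rcases cellm_inj hp ht ht' hIm2 with hc | hc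
        · exact hc.symm
        · exfalso
          have hs_z1 := hz2 hsx
          have hs_z2 := hz2' hsx
          have ht_z1 := hz3 (base_mem_c hp1 ht)
          have htd_z2 : dagS h p t l ∈ stripCell (rhoCyl (2 * p)) w' m' := by
            have h3 := base_mem_c hp1 (dag_CRep hp1 ht)
            rw [← hc] at h3
            exact hz3' h3
          obtain ⟨c, hcb, ec⟩ := col_of_mem hp1 hw hs_z1
          obtain ⟨c', hcb', ec'⟩ := col_of_mem hp1 hw ht_z1
          obtain ⟨d, hdb, ed⟩ := col_of_mem hp1 hw' hs_z2
          obtain ⟨d', hdb', ed'⟩ := col_of_mem hp1 hw' htd_z2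
          rw [dagS_snd] at ed'
          exact clashA hp ht.2.2.1 ht.2.2.2 hw.2.2.1 hw.2.2.2 hw'.2.2.1 hw'.2.2.2
            hcb hcb' hdb hdb' ec' ec ed ed'
      · rintro y ⟨hm1, hm2, z, hzskel, hxz, hyz⟩
        obtain ⟨t, l, ht, hrl, rfl⟩ := skel_mob_elim hp hm2
        obtain ⟨w, m, hw, hrm, rfl⟩ := skel_mob_elim hp hzskel
        obtain ⟨w1, hw1, hxz', hwm⟩ : ∃ w1, CRep h p w1 m ∧
            stripCell (rhoCyl (2 * p)) s k ⊆ stripCell (rhoCyl (2 * p)) w1 m ∧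
            stripCell (rhoMob h p) w1 m = stripCell (rhoMob h p) w m := by
          rcases liftSub hp hs hw hxz with ⟨h1, -⟩ | ⟨h1, -⟩
          · exact ⟨w, hw, h1, rfl⟩
          · exact ⟨dagS h p w m, dag_CRep hp1 hw, h1, mrefl hp hw⟩
        have hyz' : stripCell (rhoMob h p) t l ⊆ stripCell (rhoMob h p) w1 m := by
          rw [hwm]; exact hyz
        obtain ⟨t1, ht1, hty', htm⟩ : ∃ t1, CRep h p t1 l ∧
            stripCell (rhoCyl (2 * p)) t1 l ⊆ stripCell (rhoCyl (2 * p)) w1 m ∧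
            stripCell (rhoMob h p) t1 l = stripCell (rhoMob h p) t l := by
          rcases liftSub hp ht hw1 hyz' with ⟨g1, -⟩ | ⟨-, g2⟩
          · exact ⟨t, ht, g1, rfl⟩
          · exact ⟨dagS h p t l, dag_CRep hp1 ht, g2, mrefl hp ht⟩
        refine ⟨stripCell (rhoCyl (2 * p)) t1 l,
          ⟨(skel_cyl_iff hp hs).mpr ((skel_mob_iff hp hs).mp hm1),
           (skel_cyl_iff hp ht1).mpr hrl,
           stripCell (rhoCyl (2 * p)) w1 m, (skel_cyl_iff hp hw1).mpr hrm, hxz', hty'⟩, ?_⟩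
        show (stripCell (rhoCyl (2 * p)) t1 l).image (rhoMob h p) = _
        rw [img_cell hp1 ht1]
        exact htm
    · -- coadjacency
      simp only [PreCC.nbhd]
      refine ⟨?_, ?_, ?_⟩
      · rintro y' ⟨hm1, hm2, z', hz1, hz2, hz3⟩
        obtain ⟨t, l, ht, hrl, rfl⟩ := skel_cyl_elim hp hm2
        obtain ⟨w, m, hw, hrm, rfl⟩ := skel_cyl_elim hp hz1
        refine ⟨(skel_mob_iff hp hs).mpr ((skel_cyl_iff hp hs).mp hm1), ?_, ?_⟩
        · show (stripCell (rhoCyl (2 * p)) t l).image (rhoMob h p) ∈ _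
          rw [img_cell hp1 ht]
          exact (skel_mob_iff hp ht).mpr hrl
        · refine ⟨stripCell (rhoMob h p) w m, (skel_mob_iff hp hw).mpr hrm, ?_, ?_⟩
          · have h2 := Finset.image_subset_image (f := rhoMob h p) hz2
            rwa [img_cell hp1 hs, img_cell hp1 hw] at h2
          · show _ ⊆ (stripCell (rhoCyl (2 * p)) t l).image (rhoMob h p)
            have h2 := Finset.image_subset_image (f := rhoMob h p) hz3
            rwa [img_cell hp1 hw] at h2
      · rintro y1 ⟨-, hm2, z1, hz1, hz2, hz3⟩ y2 ⟨-, hm2', z2, hz1', hz2', hz3'⟩ hIm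
        obtain ⟨t, l, ht, hrl, rfl⟩ := skel_cyl_elim hp hm2
        obtain ⟨t', l', ht', hrl', rfl⟩ := skel_cyl_elim hp hm2'
        obtain ⟨w, m, hw, hrm, rfl⟩ := skel_cyl_elim hp hz1
        obtain ⟨w', m', hw', hrm', rfl⟩ := skel_cyl_elim hp hz1'
        have hIm2 : (stripCell (rhoCyl (2 * p)) t l).image (rhoMob h p) =
            (stripCell (rhoCyl (2 * p)) t' l').image (rhoMob h p) := hIm
        rw [img_cell hp1 ht, img_cell hp1 ht'] at hIm2
        rcases cellm_inj hp ht ht' hIm2 with hc | hc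
        · exact hc.symm
        · exfalso
          have hw_x := hz2 (base_mem_c hp1 hw)
          have hw_y1 := hz3 (base_mem_c hp1 hw)
          have hw_x' := hz2' (base_mem_c hp1 hw')
          have hw_y2 := hz3' (base_mem_c hp1 hw')
          rw [hc] at hw_y2
          obtain ⟨c1, hc1, e1⟩ := col_of_mem hp1 hs hw_x
          obtain ⟨b1, hb1, e2⟩ := col_of_mem hp1 ht hw_y1
          obtain ⟨c2, hc2, e3⟩ := col_of_mem hp1 hs hw_x'
          obtain ⟨b2, hb2, e4⟩ := col_of_mem hp1 (dag_CRep hp1 ht) hw_y2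
          rw [dagS_snd] at e4
          exact clashB hp hs.2.2.1 hs.2.2.2 ht.2.2.1 ht.2.2.2 hc1 hc2 hb1 hb2 e1 e2 e3 e4
      · rintro y ⟨hm1, hm2, z, hzskel, hzx, hzy⟩
        obtain ⟨t, l, ht, hrl, rfl⟩ := skel_mob_elim hp hm2
        obtain ⟨w, m, hw, hrm, rfl⟩ := skel_mob_elim hp hzskel
        obtain ⟨w1, hw1, hzx', hwm⟩ : ∃ w1, CRep h p w1 m ∧
            stripCell (rhoCyl (2 * p)) w1 m ⊆ stripCell (rhoCyl (2 * p)) s k ∧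
            stripCell (rhoMob h p) w1 m = stripCell (rhoMob h p) w m := by
          rcases liftSub hp hw hs hzx with ⟨h1, -⟩ | ⟨-, h2⟩
          · exact ⟨w, hw, h1, rfl⟩
          · exact ⟨dagS h p w m, dag_CRep hp1 hw, h2, mrefl hp hw⟩
        have hzy' : stripCell (rhoMob h p) w1 m ⊆ stripCell (rhoMob h p) t l := by
          rw [hwm]; exact hzy
        obtain ⟨t1, ht1, hty', htm⟩ : ∃ t1, CRep h p t1 l ∧
            stripCell (rhoCyl (2 * p)) w1 m ⊆ stripCell (rhoCyl (2 * p)) t1 l ∧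
            stripCell (rhoMob h p) t1 l = stripCell (rhoMob h p) t l := by
          rcases liftSub hp hw1 ht hzy' with ⟨g1, -⟩ | ⟨g1, -⟩
          · exact ⟨t, ht, g1, rfl⟩
          · exact ⟨dagS h p t l, dag_CRep hp1 ht, g1, mrefl hp ht⟩
        refine ⟨stripCell (rhoCyl (2 * p)) t1 l,
          ⟨(skel_cyl_iff hp hs).mpr ((skel_mob_iff hp hs).mp hm1),
           (skel_cyl_iff hp ht1).mpr hrl,
           stripCell (rhoCyl (2 * p)) w1 m, (skel_cyl_iff hp hw1).mpr hrm, hzx', hty'⟩, ?_⟩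
        show (stripCell (rhoCyl (2 * p)) t1 l).image (rhoMob h p) = _
        rw [img_cell hp1 ht1]
        exact htm
    · -- incidence
      simp only [PreCC.nbhd]
      refine ⟨?_, ?_, ?_⟩
      · rintro y' ⟨hm1, hm2, hsub⟩
        obtain ⟨t, l, ht, hrl, rfl⟩ := skel_cyl_elim hp hm2
        refine ⟨(skel_mob_iff hp hs).mpr ((skel_cyl_iff hp hs).mp hm1), ?_, ?_⟩
        · show (stripCell (rhoCyl (2 * p)) t l).image (rhoMob h p) ∈ _
          rw [img_cell hp1 ht]
          exact (skel_mob_iff hp ht).mpr hrl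
        · show _ ⊆ (stripCell (rhoCyl (2 * p)) t l).image (rhoMob h p)
          have h2 := Finset.image_subset_image (f := rhoMob h p) hsub
          rwa [img_cell hp1 hs] at h2
      · rintro y1 ⟨-, hm2, hsub⟩ y2 ⟨-, hm2', hsub'⟩ hIm
        obtain ⟨t, l, ht, hrl, rfl⟩ := skel_cyl_elim hp hm2
        obtain ⟨t', l', ht', hrl', rfl⟩ := skel_cyl_elim hp hm2'
        have hIm2 : (stripCell (rhoCyl (2 * p)) t l).image (rhoMob h p) =
            (stripCell (rhoCyl (2 * p)) t' l').image (rhoMob h p) := hIm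
        rw [img_cell hp1 ht, img_cell hp1 ht'] at hIm2
        rcases cellm_inj hp ht ht' hIm2 with hc | hc
        · exact hc.symm
        · exfalso
          have h1 := hsub hsx
          have h2 := hsub' hsx
          rw [hc] at h2
          obtain ⟨b1, hb1, eb1⟩ := col_of_mem hp1 ht h1
          obtain ⟨b2, hb2, eb2⟩ := col_of_mem hp1 (dag_CRep hp1 ht) h2
          rw [dagS_snd] at eb2
          exact clashB hp ht.2.2.1 ht.2.2.2 ht.2.2.1 ht.2.2.2 hb1 hb1 hb1 hb2 eb1 eb1 eb1 eb2
      · rintro y ⟨hm1, hm2, hsub⟩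
        obtain ⟨t, l, ht, hrl, rfl⟩ := skel_mob_elim hp hm2
        obtain ⟨t1, ht1, hsub', htm⟩ : ∃ t1, CRep h p t1 l ∧
            stripCell (rhoCyl (2 * p)) s k ⊆ stripCell (rhoCyl (2 * p)) t1 l ∧
            stripCell (rhoMob h p) t1 l = stripCell (rhoMob h p) t l := by
          rcases liftSub hp hs ht hsub with ⟨h1, -⟩ | ⟨h1, -⟩
          · exact ⟨t, ht, h1, rfl⟩
          · exact ⟨dagS h p t l, dag_CRep hp1 ht, h1, mrefl hp ht⟩
        refine ⟨stripCell (rhoCyl (2 * p)) t1 l,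
          ⟨(skel_cyl_iff hp hs).mpr ((skel_mob_iff hp hs).mp hm1),
           (skel_cyl_iff hp ht1).mpr hrl, hsub'⟩, ?_⟩
        show (stripCell (rhoCyl (2 * p)) t1 l).image (rhoMob h p) = _
        rw [img_cell hp1 ht1]
        exact htm
    · -- coincidence
      simp only [PreCC.nbhd]
      refine ⟨?_, ?_, ?_⟩
      · rintro y' ⟨hm1, hm2, hsub⟩
        obtain ⟨t, l, ht, hrl, rfl⟩ := skel_cyl_elim hp hm2
        refine ⟨(skel_mob_iff hp hs).mpr ((skel_cyl_iff hp hs).mp hm1), ?_, ?_⟩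
        · show (stripCell (rhoCyl (2 * p)) t l).image (rhoMob h p) ∈ _
          rw [img_cell hp1 ht]
          exact (skel_mob_iff hp ht).mpr hrl
        · show (stripCell (rhoCyl (2 * p)) t l).image (rhoMob h p) ⊆ _
          have h2 := Finset.image_subset_image (f := rhoMob h p) hsub
          rwa [img_cell hp1 hs] at h2
      · rintro y1 ⟨-, hm2, hsub⟩ y2 ⟨-, hm2', hsub'⟩ hIm
        obtain ⟨t, l, ht, hrl, rfl⟩ := skel_cyl_elim hp hm2
        obtain ⟨t', l', ht', hrl', rfl⟩ := skel_cyl_elim hp hm2'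
        have hIm2 : (stripCell (rhoCyl (2 * p)) t l).image (rhoMob h p) =
            (stripCell (rhoCyl (2 * p)) t' l').image (rhoMob h p) := hIm
        rw [img_cell hp1 ht, img_cell hp1 ht'] at hIm2
        rcases cellm_inj hp ht ht' hIm2 with hc | hc
        · exact hc.symm
        · exfalso
          have h1 := hsub (base_mem_c hp1 ht)
          have h2' : dagS h p t l ∈ stripCell (rhoCyl (2 * p)) s k := by
            have h3 := base_mem_c hp1 (dag_CRep hp1 ht)
            rw [← hc] at h3
            exact hsub' h3
          obtain ⟨c1, hc1b, e1⟩ := col_of_mem hp1 hs h1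
          obtain ⟨c2, hc2b, e3⟩ := col_of_mem hp1 hs h2'
          rw [dagS_snd] at e3
          have htC := ht
          obtain ⟨ta, tb, tc, td⟩ := htC
          have e2 : t.2 = if t.2 + 0 ≤ 2 * p then t.2 + 0 else 1 := by
            split_ifs <;> omega
          have e4 : (if t.2 ≤ p then t.2 + p else t.2 - p) =
              if (if t.2 ≤ p then t.2 + p else t.2 - p) + 0 ≤ 2 * p then
                (if t.2 ≤ p then t.2 + p else t.2 - p) + 0 else 1 := by
            split_ifs <;> omega
          exact clashB hp hs.2.2.1 hs.2.2.2 tc td hc1b hc2b (by omega) (by omega) e1 e2 e3 e4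
      · rintro y ⟨hm1, hm2, hsub⟩
        obtain ⟨t, l, ht, hrl, rfl⟩ := skel_mob_elim hp hm2
        obtain ⟨t1, ht1, hsub', htm⟩ : ∃ t1, CRep h p t1 l ∧
            stripCell (rhoCyl (2 * p)) t1 l ⊆ stripCell (rhoCyl (2 * p)) s k ∧
            stripCell (rhoMob h p) t1 l = stripCell (rhoMob h p) t l := by
          rcases liftSub hp ht hs hsub with ⟨h1, -⟩ | ⟨-, h2⟩
          · exact ⟨t, ht, h1, rfl⟩
          · exact ⟨dagS h p t l, dag_CRep hp1 ht, h2, mrefl hp ht⟩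
        refine ⟨stripCell (rhoCyl (2 * p)) t1 l,
          ⟨(skel_cyl_iff hp hs).mpr ((skel_mob_iff hp hs).mp hm1),
           (skel_cyl_iff hp ht1).mpr hrl, hsub'⟩, ?_⟩
        show (stripCell (rhoCyl (2 * p)) t1 l).image (rhoMob h p) = _
        rw [img_cell hp1 ht1]
        exact htm

end TDL
end

section
/- For integers h, p ≥ 3, the boundary graph ∂Möb_{h,p} of the Möbius strip CC — whose vertices are the nodes contained in some boundary 1-cell and whose edges are the boundary 1-cells — is isomorphic to a single cycle graph of length 2p. -/
namespace TDL

/-- The graph on the `0`-cells of a complex in which two distinct `0`-cells are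
adjacent iff some `1`-cell contains both. -/
def zeroGraph {S : Type*} (X : PreCC S) : SimpleGraph {x : Finset S // x ∈ X.skel 0} where
  Adj u v := u ≠ v ∧ ∃ z ∈ X.skel 1, u.1 ⊆ z ∧ v.1 ⊆ z
  symm := by
    constructor
    rintro u v ⟨hne, z, hz, h₁, h₂⟩
    exact ⟨hne.symm, z, hz, h₂, h₁⟩
  loopless := by constructor; rintro u ⟨hne, -⟩; exact hne rfl

/-- The cycle graph on `ℤ/n`: `i` and `j` are adjacent iff `i − j ≡ ±1`. -/
def cycGraph (n : ℕ) : SimpleGraph (ZMod n) where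
  Adj i j := i ≠ j ∧ (i - j = 1 ∨ j - i = 1)
  symm := by constructor; rintro i j ⟨hne, h⟩; exact ⟨hne.symm, h.symm⟩
  loopless := by constructor; rintro i ⟨hne, -⟩; exact hne rfl

end TDL

namespace TDL

/-- A boundary edge: a `1`-cell contained in exactly one `2`-cell. -/
def IsBoundaryEdge {S : Type*} (X : PreCC S) (x : Finset S) : Prop :=
  x ∈ X.skel 1 ∧ {y | y ∈ X.skel 2 ∧ x ⊆ y}.ncard = 1

/-- The boundary graph `∂X`: vertices are the nodes contained in some boundary
edge, and two distinct vertices are joined iff some boundary edge contains both. -/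
def boundaryGraph {S : Type*} (X : PreCC S) :
    SimpleGraph {v : S // ∃ x, IsBoundaryEdge X x ∧ v ∈ x} where
  Adj u v := u ≠ v ∧ ∃ x, IsBoundaryEdge X x ∧ u.1 ∈ x ∧ v.1 ∈ x
  symm := by
    constructor
    rintro u v ⟨hne, x, hx, hu, hv⟩
    exact ⟨hne.symm, x, hx, hv, hu⟩
  loopless := by constructor; rintro u ⟨hne, -⟩; exact hne rfl

/-- The disjoint union of two simple graphs. -/
def graphSum {V W : Type*} (G : SimpleGraph V) (H : SimpleGraph W) :
    SimpleGraph (V ⊕ W) where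
  Adj x y := Sum.LiftRel G.Adj H.Adj x y
  symm := by
    constructor
    rintro x y (h | h)
    · exact Sum.LiftRel.inl (G.adj_symm h)
    · exact Sum.LiftRel.inr (H.adj_symm h)
  loopless := by
    constructor
    rintro x (h | h)
    · exact G.irrefl h
    · exact H.irrefl h

end TDL

namespace TDL

lemma residue_eq {p n : ℕ} (h1 : 1 ≤ n) (h2 : n ≤ p) : residue p n = n := by
  unfold residue
  rw [Nat.mod_eq_of_lt (by omega)]
  omega

lemma residue_succ {p : ℕ} (hp : 1 ≤ p) : residue p (p + 1) = 1 := by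
  unfold residue
  simp

lemma rhoMob_id {h p : ℕ} (hp : 1 ≤ p) (a b : ℕ) (h1 : 1 ≤ b) (h2 : b ≤ p) :
    rhoMob h p (a, b) = (a, b) := by
  unfold rhoMob
  rw [if_pos]
  · simp [residue_eq h1 h2]
  · simp [residue_eq h1 (by omega : b ≤ 2 * p)]; omega

lemma rhoMob_wrap {h p : ℕ} (hp : 1 ≤ p) (a : ℕ) :
    rhoMob h p (a, p + 1) = (h + 1 - a, 1) := by
  unfold rhoMob
  rw [if_neg]
  · simp [residue_succ hp]
  · rw [residue_eq (by omega) (by omega)]; omega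

-- stripCell computations
lemma filter_ff : (Finset.univ.filter fun k' : Bool × Bool => k'.1 ≤ false ∧ k'.2 ≤ false)
    = {(false, false)} := by decide
lemma filter_tf : (Finset.univ.filter fun k' : Bool × Bool => k'.1 ≤ true ∧ k'.2 ≤ false)
    = {(false, false), (true, false)} := by decide
lemma filter_ft : (Finset.univ.filter fun k' : Bool × Bool => k'.1 ≤ false ∧ k'.2 ≤ true)
    = {(false, false), (false, true)} := by decide
lemma filter_tt : (Finset.univ.filter fun k' : Bool × Bool => k'.1 ≤ true ∧ k'.2 ≤ true)
    = {(false, false), (true, false), (false, true), (true, true)} := by decide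

lemma stripCell_ff (ρ : ℕ × ℕ → ℕ × ℕ) (s : ℕ × ℕ) :
    stripCell ρ s (false, false) = {ρ s} := by
  unfold stripCell
  rw [filter_ff]
  simp [addK]

lemma stripCell_tf (ρ : ℕ × ℕ → ℕ × ℕ) (s : ℕ × ℕ) :
    stripCell ρ s (true, false) = {ρ s, ρ (s.1 + 1, s.2)} := by
  unfold stripCell
  rw [filter_tf]
  simp [addK]

lemma stripCell_ft (ρ : ℕ × ℕ → ℕ × ℕ) (s : ℕ × ℕ) :
    stripCell ρ s (false, true) = {ρ s, ρ (s.1, s.2 + 1)} := by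
  unfold stripCell
  rw [filter_ft]
  simp [addK]

lemma stripCell_tt (ρ : ℕ × ℕ → ℕ × ℕ) (s : ℕ × ℕ) :
    stripCell ρ s (true, true) = {ρ s, ρ (s.1 + 1, s.2), ρ (s.1, s.2 + 1), ρ (s.1 + 1, s.2 + 1)} := by
  unfold stripCell
  rw [filter_tt]
  simp [addK, Finset.image_insert]
/-- Interior square cell. -/
def Sq (a b : ℕ) : Finset (ℕ × ℕ) := {(a,b),(a+1,b),(a,b+1),(a+1,b+1)}
/-- Wrapping square cell. -/
def SqW (h p a : ℕ) : Finset (ℕ × ℕ) := {(a,p),(a+1,p),(h+1-a,1),(h-a,1)}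
/-- Vertical edge. -/
def Ev (a b : ℕ) : Finset (ℕ × ℕ) := {(a,b),(a+1,b)}
/-- Horizontal edge. -/
def Eh (a b : ℕ) : Finset (ℕ × ℕ) := {(a,b),(a,b+1)}
/-- Wrapping edge. -/
def Ew (h p a : ℕ) : Finset (ℕ × ℕ) := {(a,p),(h+1-a,1)}

lemma mem_skel_iff {h p r : ℕ} {ρ : ℕ × ℕ → ℕ × ℕ} {y : Finset (ℕ × ℕ)} :
    y ∈ (stripPre h p ρ).skel r ↔
      (∃ s ∈ gridNodes h p, ∃ k : Bool × Bool, ρ (addK s k) ∈ gridNodes h p ∧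
        y = stripCell ρ s k ∧ stripRank k = r) ∧
      (∀ s ∈ gridNodes h p, ∀ k : Bool × Bool, ρ (addK s k) ∈ gridNodes h p →
        y = stripCell ρ s k → r ≤ stripRank k) := by
  set T : Set ℕ := {r | ∃ s ∈ gridNodes h p, ∃ k : Bool × Bool,
    ρ (addK s k) ∈ gridNodes h p ∧ y = stripCell ρ s k ∧ r = stripRank k} with hT
  have hmemT : ∀ r', r' ∈ T ↔ ∃ s ∈ gridNodes h p, ∃ k : Bool × Bool,
      ρ (addK s k) ∈ gridNodes h p ∧ y = stripCell ρ s k ∧ r' = stripRank k := fun _ => Iff.rfl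
  have hskel : y ∈ (stripPre h p ρ).skel r ↔
      (∃ s ∈ gridNodes h p, ∃ k : Bool × Bool,
        ρ (addK s k) ∈ gridNodes h p ∧ y = stripCell ρ s k) ∧ sInf T = r := Iff.rfl
  rw [hskel]
  constructor
  · rintro ⟨⟨s, hs, k, hk, hy⟩, hinf⟩
    have hne : T.Nonempty := ⟨stripRank k, s, hs, k, hk, hy, rfl⟩
    have hmem := Nat.sInf_mem hne
    rw [hinf] at hmem
    obtain ⟨s', hs', k', hk', hy', hr'⟩ := hmem
    refine ⟨⟨s', hs', k', hk', hy', hr'.symm⟩, ?_⟩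
    intro s'' hs'' k'' hk'' hy''
    rw [← hinf]
    exact Nat.sInf_le ⟨s'', hs'', k'', hk'', hy'', rfl⟩
  · rintro ⟨⟨s, hs, k, hk, hy, hr⟩, hmin⟩
    have hrT : r ∈ T := ⟨s, hs, k, hk, hy, hr.symm⟩
    have hne : T.Nonempty := ⟨r, hrT⟩
    refine ⟨⟨s, hs, k, hk, hy⟩, ?_⟩
    have h1 : sInf T ≤ r := Nat.sInf_le hrT
    have h2 : r ≤ sInf T := by
      obtain ⟨s', hs', k', hk', hy', hr'⟩ := Nat.sInf_mem hne
      rw [hr']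
      exact hmin s' hs' k' hk' hy'
    omega

lemma card2 (a b : ℕ × ℕ) : ({a, b} : Finset (ℕ × ℕ)).card ≤ 2 := by
  have h1 := Finset.card_insert_le a ({b} : Finset (ℕ × ℕ))
  simp at h1; omega

lemma card4 (a b c d : ℕ × ℕ) : ({a, b, c, d} : Finset (ℕ × ℕ)).card ≤ 4 := by
  have h1 := Finset.card_insert_le a ({b, c, d} : Finset (ℕ × ℕ))
  have h2 := Finset.card_insert_le b ({c, d} : Finset (ℕ × ℕ))
  have h3 := Finset.card_insert_le c ({d} : Finset (ℕ × ℕ))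
  simp at h3; omega

lemma card_stripCell_le (ρ : ℕ × ℕ → ℕ × ℕ) (s : ℕ × ℕ) (k : Bool × Bool) :
    (stripCell ρ s k).card ≤ 2 ^ stripRank k := by
  rcases k with ⟨k1, k2⟩
  cases k1 <;> cases k2 <;>
    simp only [stripCell_ff, stripCell_tf, stripCell_ft, stripCell_tt, stripRank]
  · simp
  · exact le_trans (card2 _ _) (by norm_num)
  · exact le_trans (card2 _ _) (by norm_num)
  · exact le_trans (card4 _ _ _ _) (by norm_num)
lemma one_le_rank {ρ : ℕ × ℕ → ℕ × ℕ} {s : ℕ × ℕ} {k : Bool × Bool} {y : Finset (ℕ × ℕ)}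
    (hy : y = stripCell ρ s k) (hcard : 2 ≤ y.card) : 1 ≤ stripRank k := by
  have hle := card_stripCell_le ρ s k
  rw [← hy] at hle
  rcases k with ⟨k1, k2⟩
  cases k1 <;> cases k2 <;> simp [stripRank] at hle ⊢ <;> omega

lemma two_le_rank {ρ : ℕ × ℕ → ℕ × ℕ} {s : ℕ × ℕ} {k : Bool × Bool} {y : Finset (ℕ × ℕ)}
    (hy : y = stripCell ρ s k) (hcard : 3 ≤ y.card) : 2 ≤ stripRank k := by
  have hle := card_stripCell_le ρ s k
  rw [← hy] at hle
  rcases k with ⟨k1, k2⟩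
  cases k1 <;> cases k2 <;> simp [stripRank] at hle ⊢ <;> omega

lemma card_pair_of_ne {a b : ℕ × ℕ} (hne : a ≠ b) : ({a, b} : Finset (ℕ × ℕ)).card = 2 := by
  rw [Finset.card_insert_of_notMem (by simp [hne]), Finset.card_singleton]

lemma card_four_of_distinct {a b c d : ℕ × ℕ} (h1 : a ≠ b) (h2 : a ≠ c) (h3 : a ≠ d)
    (h4 : b ≠ c) (h5 : b ≠ d) (h6 : c ≠ d) : ({a, b, c, d} : Finset (ℕ × ℕ)).card = 4 := by
  rw [Finset.card_insert_of_notMem (by simp [h1, h2, h3]),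
    Finset.card_insert_of_notMem (by simp [h4, h5]),
    Finset.card_insert_of_notMem (by simp [h6]), Finset.card_singleton]

lemma card_Ev {a b : ℕ} : (Ev a b).card = 2 :=
  card_pair_of_ne (by simp)

lemma card_Eh {a b : ℕ} : (Eh a b).card = 2 :=
  card_pair_of_ne (by simp)

lemma card_Ew {h p a : ℕ} (hp : 3 ≤ p) : (Ew h p a).card = 2 :=
  card_pair_of_ne (by simp; omega)

lemma card_Sq {a b : ℕ} : (Sq a b).card = 4 :=
  card_four_of_distinct (by simp) (by simp) (by simp) (by simp) (by simp) (by simp)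

lemma card_SqW {h p a : ℕ} (hp : 3 ≤ p) (ha : a + 1 ≤ h) : (SqW h p a).card = 4 := by
  refine card_four_of_distinct ?_ ?_ ?_ ?_ ?_ ?_ <;> simp <;> omega

lemma mem_grid {h p a b : ℕ} : (a, b) ∈ gridNodes h p ↔ 1 ≤ a ∧ a ≤ h ∧ 1 ≤ b ∧ b ≤ p :=
  Iff.rfl

lemma mem_skel1_iff {h p : ℕ} (hh : 3 ≤ h) (hp : 3 ≤ p) {y : Finset (ℕ × ℕ)} :
    y ∈ (mobPre h p).skel 1 ↔
      (∃ a b, 1 ≤ a ∧ a + 1 ≤ h ∧ 1 ≤ b ∧ b ≤ p ∧ y = Ev a b) ∨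
      (∃ a b, 1 ≤ a ∧ a ≤ h ∧ 1 ≤ b ∧ b + 1 ≤ p ∧ y = Eh a b) ∨
      (∃ a, 1 ≤ a ∧ a ≤ h ∧ y = Ew h p a) := by
  rw [mobPre, mem_skel_iff]
  constructor
  · rintro ⟨⟨⟨a, b⟩, hs, ⟨k1, k2⟩, hk, hy, hr⟩, -⟩
    rw [mem_grid] at hs
    simp only [addK] at hk
    cases k1 <;> cases k2 <;> simp only [stripRank] at hr <;> simp at hr hk <;> try omega
    · -- k = (false, true)
      by_cases hbp : b = p
      · subst hbp
        rw [rhoMob_wrap (by omega)] at hk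
        rw [mem_grid] at hk
        right; right
        refine ⟨a, by omega, by omega, ?_⟩
        rw [hy, stripCell_ft]
        simp only
        rw [rhoMob_id (by omega) _ _ (by omega) (by omega), rhoMob_wrap (by omega)]
        rfl
      · rw [rhoMob_id (by omega) _ _ (by omega) (by omega)] at hk
        rw [mem_grid] at hk
        right; left
        refine ⟨a, b, by omega, by omega, by omega, by omega, ?_⟩
        rw [hy, stripCell_ft]
        simp only
        rw [rhoMob_id (by omega) _ _ (by omega) (by omega),
          rhoMob_id (by omega) _ _ (by omega) (by omega)]
        rfl
    · -- k = (true, false)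
      rw [rhoMob_id (by omega) _ _ (by omega) (by omega)] at hk
      rw [mem_grid] at hk
      left
      refine ⟨a, b, by omega, by omega, by omega, by omega, ?_⟩
      rw [hy, stripCell_tf]
      simp only
      rw [rhoMob_id (by omega) _ _ (by omega) (by omega),
        rhoMob_id (by omega) _ _ (by omega) (by omega)]
      rfl
  · intro hcase
    have hcard : 2 ≤ y.card := by
      rcases hcase with ⟨a, b, _, _, _, _, rfl⟩ | ⟨a, b, _, _, _, _, rfl⟩ | ⟨a, _, _, rfl⟩
      · rw [card_Ev]
      · rw [card_Eh]
      · rw [card_Ew hp]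
    refine ⟨?_, fun s hs k hk hy => one_le_rank hy hcard⟩
    rcases hcase with ⟨a, b, h1, h2, h3, h4, rfl⟩ | ⟨a, b, h1, h2, h3, h4, rfl⟩ | ⟨a, h1, h2, rfl⟩
    · refine ⟨(a, b), by rw [mem_grid]; omega, (true, false), ?_, ?_, rfl⟩
      · simp only [addK]
        simp
        rw [rhoMob_id (by omega) _ _ (by omega) (by omega), mem_grid]
        omega
      · rw [stripCell_tf]
        simp only
        rw [rhoMob_id (by omega) _ _ (by omega) (by omega),
          rhoMob_id (by omega) _ _ (by omega) (by omega)]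
        rfl
    · refine ⟨(a, b), by rw [mem_grid]; omega, (false, true), ?_, ?_, rfl⟩
      · simp only [addK]
        simp
        rw [rhoMob_id (by omega) _ _ (by omega) (by omega), mem_grid]
        omega
      · rw [stripCell_ft]
        simp only
        rw [rhoMob_id (by omega) _ _ (by omega) (by omega),
          rhoMob_id (by omega) _ _ (by omega) (by omega)]
        rfl
    · refine ⟨(a, p), by rw [mem_grid]; omega, (false, true), ?_, ?_, rfl⟩
      · simp only [addK]
        simp
        rw [rhoMob_wrap (by omega), mem_grid]
        omega
      · rw [stripCell_ft]
        simp only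
        rw [rhoMob_id (by omega) _ _ (by omega) (by omega), rhoMob_wrap (by omega)]
        rfl
lemma mem_skel2_iff {h p : ℕ} (hh : 3 ≤ h) (hp : 3 ≤ p) {y : Finset (ℕ × ℕ)} :
    y ∈ (mobPre h p).skel 2 ↔
      (∃ a b, 1 ≤ a ∧ a + 1 ≤ h ∧ 1 ≤ b ∧ b + 1 ≤ p ∧ y = Sq a b) ∨
      (∃ a, 1 ≤ a ∧ a + 1 ≤ h ∧ y = SqW h p a) := by
  rw [mobPre, mem_skel_iff]
  constructor
  · rintro ⟨⟨⟨a, b⟩, hs, ⟨k1, k2⟩, hk, hy, hr⟩, -⟩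
    rw [mem_grid] at hs
    simp only [addK] at hk
    cases k1 <;> cases k2 <;> simp only [stripRank] at hr <;> simp at hr hk <;> try omega
    -- k = (true, true)
    by_cases hbp : b = p
    · subst hbp
      rw [rhoMob_wrap (by omega)] at hk
      rw [mem_grid] at hk
      right
      refine ⟨a, by omega, by omega, ?_⟩
      rw [hy, stripCell_tt]
      simp only
      rw [rhoMob_id (by omega) _ _ (by omega) (by omega),
        rhoMob_id (by omega) _ _ (by omega) (by omega),
        rhoMob_wrap (by omega), rhoMob_wrap (by omega)]
      have : h + 1 - (a + 1) = h - a := by omega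
      rw [this]
      rfl
    · rw [rhoMob_id (by omega) _ _ (by omega) (by omega)] at hk
      rw [mem_grid] at hk
      left
      refine ⟨a, b, by omega, by omega, by omega, by omega, ?_⟩
      rw [hy, stripCell_tt]
      simp only
      rw [rhoMob_id (by omega) _ _ (by omega) (by omega),
        rhoMob_id (by omega) _ _ (by omega) (by omega),
        rhoMob_id (by omega) _ _ (by omega) (by omega),
        rhoMob_id (by omega) _ _ (by omega) (by omega)]
      rfl
  · intro hcase
    have hcard : 3 ≤ y.card := by
      rcases hcase with ⟨a, b, _, _, _, _, rfl⟩ | ⟨a, h1, h2, rfl⟩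
      · rw [card_Sq]; omega
      · rw [card_SqW hp h2]; omega
    refine ⟨?_, fun s hs k hk hy => two_le_rank hy hcard⟩
    rcases hcase with ⟨a, b, h1, h2, h3, h4, rfl⟩ | ⟨a, h1, h2, rfl⟩
    · refine ⟨(a, b), by rw [mem_grid]; omega, (true, true), ?_, ?_, rfl⟩
      · simp only [addK]
        simp
        rw [rhoMob_id (by omega) _ _ (by omega) (by omega), mem_grid]
        omega
      · rw [stripCell_tt]
        simp only
        rw [rhoMob_id (by omega) _ _ (by omega) (by omega),
          rhoMob_id (by omega) _ _ (by omega) (by omega),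
          rhoMob_id (by omega) _ _ (by omega) (by omega),
          rhoMob_id (by omega) _ _ (by omega) (by omega)]
        rfl
    · refine ⟨(a, p), by rw [mem_grid]; omega, (true, true), ?_, ?_, rfl⟩
      · simp only [addK]
        simp
        rw [rhoMob_wrap (by omega), mem_grid]
        omega
      · rw [stripCell_tt]
        simp only
        rw [rhoMob_id (by omega) _ _ (by omega) (by omega),
          rhoMob_id (by omega) _ _ (by omega) (by omega),
          rhoMob_wrap (by omega), rhoMob_wrap (by omega)]
        have : h + 1 - (a + 1) = h - a := by omega
        rw [this]
        rfl
lemma ncard_ne_one_of_two {α : Type*} {s : Set α} {y1 y2 : α}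
    (h1 : y1 ∈ s) (h2 : y2 ∈ s) (hne : y1 ≠ y2) : s.ncard ≠ 1 := by
  intro hc
  obtain ⟨a, ha⟩ := Set.ncard_eq_one.mp hc
  rw [ha, Set.mem_singleton_iff] at h1 h2
  exact hne (h1.trans h2.symm)

lemma ne_of_witness {y1 y2 : Finset (ℕ × ℕ)} (w : ℕ × ℕ) (h1 : w ∈ y1) (h2 : w ∉ y2) :
    y1 ≠ y2 := fun he => h2 (he ▸ h1)

lemma mem_sqSet_Sq {h p : ℕ} (hh : 3 ≤ h) (hp : 3 ≤ p) {x : Finset (ℕ × ℕ)} {a b : ℕ}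
    (h1 : 1 ≤ a) (h2 : a + 1 ≤ h) (h3 : 1 ≤ b) (h4 : b + 1 ≤ p) (hsub : x ⊆ Sq a b) :
    Sq a b ∈ {y | y ∈ (mobPre h p).skel 2 ∧ x ⊆ y} :=
  ⟨(mem_skel2_iff hh hp).mpr (Or.inl ⟨a, b, h1, h2, h3, h4, rfl⟩), hsub⟩

lemma mem_sqSet_SqW {h p : ℕ} (hh : 3 ≤ h) (hp : 3 ≤ p) {x : Finset (ℕ × ℕ)} {a : ℕ}
    (h1 : 1 ≤ a) (h2 : a + 1 ≤ h) (hsub : x ⊆ SqW h p a) :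
    SqW h p a ∈ {y | y ∈ (mobPre h p).skel 2 ∧ x ⊆ y} :=
  ⟨(mem_skel2_iff hh hp).mpr (Or.inr ⟨a, h1, h2, rfl⟩), hsub⟩

lemma sqSet_Eh1 {h p b : ℕ} (hh : 3 ≤ h) (hp : 3 ≤ p) (hb1 : 1 ≤ b) (hb2 : b + 1 ≤ p) :
    {y | y ∈ (mobPre h p).skel 2 ∧ Eh 1 b ⊆ y} = {Sq 1 b} := by
  ext y
  simp only [Set.mem_setOf_eq, Set.mem_singleton_iff]
  constructor
  · rintro ⟨hy2, hsub⟩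
    rcases (mem_skel2_iff hh hp).mp hy2 with ⟨a', b', h1, h2, h3, h4, rfl⟩ | ⟨a', h1, h2, rfl⟩
    · simp [Eh, Sq, Finset.insert_subset_iff, Prod.ext_iff] at hsub
      have : a' = 1 ∧ b' = b := by omega
      rw [this.1, this.2]
    · exfalso
      simp [Eh, SqW, Finset.insert_subset_iff, Prod.ext_iff] at hsub
      omega
  · rintro rfl
    exact mem_sqSet_Sq hh hp (by omega) (by omega) hb1 hb2
      (by simp [Eh, Sq, Finset.insert_subset_iff])

lemma sqSet_Ehh {h p b : ℕ} (hh : 3 ≤ h) (hp : 3 ≤ p) (hb1 : 1 ≤ b) (hb2 : b + 1 ≤ p) :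
    {y | y ∈ (mobPre h p).skel 2 ∧ Eh h b ⊆ y} = {Sq (h - 1) b} := by
  ext y
  simp only [Set.mem_setOf_eq, Set.mem_singleton_iff]
  constructor
  · rintro ⟨hy2, hsub⟩
    rcases (mem_skel2_iff hh hp).mp hy2 with ⟨a', b', h1, h2, h3, h4, rfl⟩ | ⟨a', h1, h2, rfl⟩
    · simp [Eh, Sq, Finset.insert_subset_iff, Prod.ext_iff] at hsub
      have : a' = h - 1 ∧ b' = b := by omega
      rw [this.1, this.2]
    · exfalso
      simp [Eh, SqW, Finset.insert_subset_iff, Prod.ext_iff] at hsub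
      omega
  · rintro rfl
    refine mem_sqSet_Sq hh hp (by omega) (by omega) hb1 hb2 ?_
    have : h - 1 + 1 = h := by omega
    simp [Eh, Sq, Finset.insert_subset_iff, this]

lemma sqSet_Ew1 {h p : ℕ} (hh : 3 ≤ h) (hp : 3 ≤ p) :
    {y | y ∈ (mobPre h p).skel 2 ∧ Ew h p 1 ⊆ y} = {SqW h p 1} := by
  ext y
  simp only [Set.mem_setOf_eq, Set.mem_singleton_iff]
  constructor
  · rintro ⟨hy2, hsub⟩
    rcases (mem_skel2_iff hh hp).mp hy2 with ⟨a', b', h1, h2, h3, h4, rfl⟩ | ⟨a', h1, h2, rfl⟩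
    · exfalso
      simp [Ew, Sq, Finset.insert_subset_iff, Prod.ext_iff] at hsub
      omega
    · simp [Ew, SqW, Finset.insert_subset_iff, Prod.ext_iff] at hsub
      have : a' = 1 := by omega
      rw [this]
  · rintro rfl
    refine mem_sqSet_SqW hh hp (by omega) (by omega) ?_
    simp [Ew, SqW, Finset.insert_subset_iff]

lemma sqSet_Ewh {h p : ℕ} (hh : 3 ≤ h) (hp : 3 ≤ p) :
    {y | y ∈ (mobPre h p).skel 2 ∧ Ew h p h ⊆ y} = {SqW h p (h - 1)} := by
  ext y
  simp only [Set.mem_setOf_eq, Set.mem_singleton_iff]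
  constructor
  · rintro ⟨hy2, hsub⟩
    rcases (mem_skel2_iff hh hp).mp hy2 with ⟨a', b', h1, h2, h3, h4, rfl⟩ | ⟨a', h1, h2, rfl⟩
    · exfalso
      simp [Ew, Sq, Finset.insert_subset_iff, Prod.ext_iff] at hsub
      omega
    · simp [Ew, SqW, Finset.insert_subset_iff, Prod.ext_iff] at hsub
      have : a' = h - 1 := by omega
      rw [this]
  · rintro rfl
    refine mem_sqSet_SqW hh hp (by omega) (by omega) ?_
    simp [Ew, SqW, Finset.insert_subset_iff, Prod.ext_iff]
    omega
lemma not_boundary_Ev {h p a b : ℕ} (hh : 3 ≤ h) (hp : 3 ≤ p) (h1 : 1 ≤ a) (h2 : a + 1 ≤ h)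
    (h3 : 1 ≤ b) (h4 : b ≤ p) : ¬ IsBoundaryEdge (mobPre h p) (Ev a b) := by
  rintro ⟨-, hcount⟩
  by_cases hb1 : b = 1
  · refine ncard_ne_one_of_two
      (mem_sqSet_Sq hh hp (b := b) h1 h2 h3 (by omega)
        (by simp [Ev, Sq, Finset.insert_subset_iff]))
      (mem_sqSet_SqW hh hp (a := h - a) (by omega) (by omega)
        (by simp [Ev, SqW, Finset.insert_subset_iff, Prod.ext_iff] <;> omega))
      (ne_of_witness (a, b + 1) (by simp [Sq]) (by simp [SqW, Prod.ext_iff] <;> omega)) hcount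
  · by_cases hbp : b = p
    · refine ncard_ne_one_of_two
        (mem_sqSet_Sq hh hp (b := b - 1) h1 h2 (by omega) (by omega)
          (by simp [Ev, Sq, Finset.insert_subset_iff, Prod.ext_iff] <;> omega))
        (mem_sqSet_SqW hh hp (a := a) h1 h2
          (by simp [Ev, SqW, Finset.insert_subset_iff, Prod.ext_iff] <;> omega))
        (ne_of_witness (a, b - 1) (by simp [Sq]) (by simp [SqW, Prod.ext_iff] <;> omega)) hcount
    · refine ncard_ne_one_of_two
        (mem_sqSet_Sq hh hp (b := b) h1 h2 h3 (by omega)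
          (by simp [Ev, Sq, Finset.insert_subset_iff]))
        (mem_sqSet_Sq hh hp (b := b - 1) h1 h2 (by omega) (by omega)
          (by simp [Ev, Sq, Finset.insert_subset_iff, Prod.ext_iff] <;> omega))
        (ne_of_witness (a, b + 1) (by simp [Sq]) (by simp [Sq, Prod.ext_iff] <;> omega)) hcount

lemma not_boundary_Eh_mid {h p a b : ℕ} (hh : 3 ≤ h) (hp : 3 ≤ p) (h1 : 2 ≤ a) (h2 : a + 1 ≤ h)
    (h3 : 1 ≤ b) (h4 : b + 1 ≤ p) : ¬ IsBoundaryEdge (mobPre h p) (Eh a b) := by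
  rintro ⟨-, hcount⟩
  refine ncard_ne_one_of_two
    (mem_sqSet_Sq hh hp (a := a) (by omega) h2 h3 h4
      (by simp [Eh, Sq, Finset.insert_subset_iff]))
    (mem_sqSet_Sq hh hp (a := a - 1) (by omega) (by omega) h3 h4
      (by simp [Eh, Sq, Finset.insert_subset_iff, Prod.ext_iff] <;> omega))
    (ne_of_witness (a + 1, b) (by simp [Sq]) (by simp [Sq, Prod.ext_iff] <;> omega)) hcount

lemma not_boundary_Ew_mid {h p a : ℕ} (hh : 3 ≤ h) (hp : 3 ≤ p) (h1 : 2 ≤ a) (h2 : a + 1 ≤ h) :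
    ¬ IsBoundaryEdge (mobPre h p) (Ew h p a) := by
  rintro ⟨-, hcount⟩
  refine ncard_ne_one_of_two
    (mem_sqSet_SqW hh hp (a := a) (by omega) h2
      (by simp [Ew, SqW, Finset.insert_subset_iff, Prod.ext_iff] <;> omega))
    (mem_sqSet_SqW hh hp (a := a - 1) (by omega) (by omega)
      (by simp [Ew, SqW, Finset.insert_subset_iff, Prod.ext_iff] <;> omega))
    (ne_of_witness (a + 1, p) (by simp [SqW]) (by simp [SqW, Prod.ext_iff] <;> omega)) hcount

lemma isBoundaryEdge_iff {h p : ℕ} (hh : 3 ≤ h) (hp : 3 ≤ p) {x : Finset (ℕ × ℕ)} :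
    IsBoundaryEdge (mobPre h p) x ↔
      (∃ b, 1 ≤ b ∧ b + 1 ≤ p ∧ (x = Eh 1 b ∨ x = Eh h b)) ∨ x = Ew h p 1 ∨ x = Ew h p h := by
  constructor
  · intro hx
    have hx1 := hx.1
    rcases (mem_skel1_iff hh hp).mp hx1 with ⟨a, b, h1, h2, h3, h4, rfl⟩ |
      ⟨a, b, h1, h2, h3, h4, rfl⟩ | ⟨a, h1, h2, rfl⟩
    · exact absurd hx (not_boundary_Ev hh hp h1 h2 h3 h4)
    · by_cases ha1 : a = 1
      · subst ha1; exact Or.inl ⟨b, h3, h4, Or.inl rfl⟩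
      · by_cases hah : a = h
        · subst hah; exact Or.inl ⟨b, h3, h4, Or.inr rfl⟩
        · exact absurd hx (not_boundary_Eh_mid hh hp (by omega) (by omega) h3 h4)
    · by_cases ha1 : a = 1
      · subst ha1; exact Or.inr (Or.inl rfl)
      · by_cases hah : a = h
        · subst hah; exact Or.inr (Or.inr rfl)
        · exact absurd hx (not_boundary_Ew_mid hh hp (by omega) (by omega))
  · rintro (⟨b, hb1, hb2, rfl | rfl⟩ | rfl | rfl)
    · exact ⟨(mem_skel1_iff hh hp).mpr (Or.inr (Or.inl ⟨1, b, by omega, by omega, hb1, hb2, rfl⟩)),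
        by rw [sqSet_Eh1 hh hp hb1 hb2]; exact Set.ncard_singleton _⟩
    · exact ⟨(mem_skel1_iff hh hp).mpr (Or.inr (Or.inl ⟨h, b, by omega, by omega, hb1, hb2, rfl⟩)),
        by rw [sqSet_Ehh hh hp hb1 hb2]; exact Set.ncard_singleton _⟩
    · exact ⟨(mem_skel1_iff hh hp).mpr (Or.inr (Or.inr ⟨1, by omega, by omega, rfl⟩)),
        by rw [sqSet_Ew1 hh hp]; exact Set.ncard_singleton _⟩
    · exact ⟨(mem_skel1_iff hh hp).mpr (Or.inr (Or.inr ⟨h, by omega, by omega, rfl⟩)),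
        by rw [sqSet_Ewh hh hp]; exact Set.ncard_singleton _⟩
lemma mem_boundary_vertex_iff {h p : ℕ} (hh : 3 ≤ h) (hp : 3 ≤ p) (v : ℕ × ℕ) :
    (∃ x, IsBoundaryEdge (mobPre h p) x ∧ v ∈ x) ↔
      (v.1 = 1 ∨ v.1 = h) ∧ 1 ≤ v.2 ∧ v.2 ≤ p := by
  obtain ⟨r, c⟩ := v
  constructor
  · rintro ⟨x, hx, hvx⟩
    rcases (isBoundaryEdge_iff hh hp).mp hx with ⟨b, hb1, hb2, rfl | rfl⟩ | rfl | rfl <;>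
      simp [Eh, Ew, Prod.ext_iff] at hvx <;> omega
  · rintro ⟨hr, hc1, hc2⟩
    by_cases hcp : c = p
    · rcases hr with hr | hr
      · exact ⟨Ew h p 1, (isBoundaryEdge_iff hh hp).mpr (Or.inr (Or.inl rfl)),
          by simp [Ew, Prod.ext_iff]; omega⟩
      · exact ⟨Ew h p h, (isBoundaryEdge_iff hh hp).mpr (Or.inr (Or.inr rfl)),
          by simp [Ew, Prod.ext_iff]; omega⟩
    · rcases hr with hr | hr
      · exact ⟨Eh 1 c, (isBoundaryEdge_iff hh hp).mpr
          (Or.inl ⟨c, by omega, by omega, Or.inl rfl⟩), by simp [Eh, Prod.ext_iff]; omega⟩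
      · exact ⟨Eh h c, (isBoundaryEdge_iff hh hp).mpr
          (Or.inl ⟨c, by omega, by omega, Or.inr rfl⟩), by simp [Eh, Prod.ext_iff]; omega⟩

/-- Explicit adjacency relation on boundary nodes. -/
def badj (h p : ℕ) (u v : ℕ × ℕ) : Prop :=
  (u.1 = v.1 ∧ (u.2 + 1 = v.2 ∨ v.2 + 1 = u.2)) ∨
  (u.1 = 1 ∧ u.2 = p ∧ v.1 = h ∧ v.2 = 1) ∨ (v.1 = 1 ∧ v.2 = p ∧ u.1 = h ∧ u.2 = 1) ∨
  (u.1 = h ∧ u.2 = p ∧ v.1 = 1 ∧ v.2 = 1) ∨ (v.1 = h ∧ v.2 = p ∧ u.1 = 1 ∧ u.2 = 1)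
lemma badj_row {h p u1 u2 v1 v2 : ℕ} (h1 : u1 = v1) (h2 : u2 + 1 = v2 ∨ v2 + 1 = u2) :
    badj h p (u1, u2) (v1, v2) := Or.inl ⟨h1, h2⟩
lemma badj_w1 {h p u1 u2 v1 v2 : ℕ} (h1 : u1 = 1) (h2 : u2 = p) (h3 : v1 = h) (h4 : v2 = 1) :
    badj h p (u1, u2) (v1, v2) := Or.inr (Or.inl ⟨h1, h2, h3, h4⟩)
lemma badj_w1' {h p u1 u2 v1 v2 : ℕ} (h1 : v1 = 1) (h2 : v2 = p) (h3 : u1 = h) (h4 : u2 = 1) :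
    badj h p (u1, u2) (v1, v2) := Or.inr (Or.inr (Or.inl ⟨h1, h2, h3, h4⟩))
lemma badj_w2 {h p u1 u2 v1 v2 : ℕ} (h1 : u1 = h) (h2 : u2 = p) (h3 : v1 = 1) (h4 : v2 = 1) :
    badj h p (u1, u2) (v1, v2) := Or.inr (Or.inr (Or.inr (Or.inl ⟨h1, h2, h3, h4⟩)))
lemma badj_w2' {h p u1 u2 v1 v2 : ℕ} (h1 : v1 = h) (h2 : v2 = p) (h3 : u1 = 1) (h4 : u2 = 1) :
    badj h p (u1, u2) (v1, v2) := Or.inr (Or.inr (Or.inr (Or.inr ⟨h1, h2, h3, h4⟩)))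

lemma badj_of_edge {h p : ℕ} (hh : 3 ≤ h) (hp : 3 ≤ p) {u1 u2 v1 v2 : ℕ}
    (hne : ¬(u1 = v1 ∧ u2 = v2)) {x : Finset (ℕ × ℕ)}
    (hx : IsBoundaryEdge (mobPre h p) x)
    (hux : (u1, u2) ∈ x) (hvx : (v1, v2) ∈ x) : badj h p (u1, u2) (v1, v2) := by
  rcases (isBoundaryEdge_iff hh hp).mp hx with ⟨b, hb1, hb2, rfl | rfl⟩ | rfl | rfl <;>
    simp only [Eh, Ew, Finset.mem_insert, Finset.mem_singleton, Prod.mk.injEq] at hux hvx <;>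
    rcases hux with ⟨e1, e2⟩ | ⟨e1, e2⟩ <;> rcases hvx with ⟨f1, f2⟩ | ⟨f1, f2⟩ <;>
    first
      | exact absurd ⟨by omega, by omega⟩ hne
      | exact badj_row (by omega) (Or.inl (by omega))
      | exact badj_row (by omega) (Or.inr (by omega))
      | exact badj_w1 (by omega) (by omega) (by omega) (by omega)
      | exact badj_w1' (by omega) (by omega) (by omega) (by omega)
      | exact badj_w2 (by omega) (by omega) (by omega) (by omega)
      | exact badj_w2' (by omega) (by omega) (by omega) (by omega)
lemma adj_iff_badj {h p : ℕ} (hh : 3 ≤ h) (hp : 3 ≤ p) {u1 u2 v1 v2 : ℕ}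
    (hu : (u1 = 1 ∨ u1 = h) ∧ 1 ≤ u2 ∧ u2 ≤ p)
    (hv : (v1 = 1 ∨ v1 = h) ∧ 1 ≤ v2 ∧ v2 ≤ p) :
    ((u1, u2) ≠ (v1, v2) ∧ ∃ x, IsBoundaryEdge (mobPre h p) x ∧ (u1, u2) ∈ x ∧ (v1, v2) ∈ x)
      ↔ badj h p (u1, u2) (v1, v2) := by
  constructor
  · rintro ⟨hne, x, hx, hux, hvx⟩
    simp only [ne_eq, Prod.mk.injEq] at hne
    exact badj_of_edge hh hp hne hx hux hvx
  · intro hb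
    have hne : (u1, u2) ≠ (v1, v2) := by
      simp only [ne_eq, Prod.mk.injEq, not_and]
      rcases hb with ⟨h1, h2 | h2⟩ | ⟨h1, h2, h3, h4⟩ | ⟨h1, h2, h3, h4⟩ |
        ⟨h1, h2, h3, h4⟩ | ⟨h1, h2, h3, h4⟩ <;> omega
    refine ⟨hne, ?_⟩
    rcases hb with ⟨hrow, hcol | hcol⟩ | ⟨h1, h2, h3, h4⟩ | ⟨h1, h2, h3, h4⟩ |
      ⟨h1, h2, h3, h4⟩ | ⟨h1, h2, h3, h4⟩
    · refine ⟨Eh u1 u2, (isBoundaryEdge_iff hh hp).mpr (Or.inl ⟨u2, by omega, by omega, ?_⟩),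
        by simp [Eh], by simp [Eh, Prod.ext_iff]; omega⟩
      rcases hu.1 with h1 | h1
      · exact Or.inl (by rw [h1])
      · exact Or.inr (by rw [h1])
    · refine ⟨Eh v1 v2, (isBoundaryEdge_iff hh hp).mpr (Or.inl ⟨v2, by omega, by omega, ?_⟩),
        by simp [Eh, Prod.ext_iff]; omega, by simp [Eh]⟩
      rcases hv.1 with h1 | h1
      · exact Or.inl (by rw [h1])
      · exact Or.inr (by rw [h1])
    · exact ⟨Ew h p 1, (isBoundaryEdge_iff hh hp).mpr (Or.inr (Or.inl rfl)),
        by simp [Ew, Prod.ext_iff]; omega, by simp [Ew, Prod.ext_iff]; omega⟩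
    · exact ⟨Ew h p 1, (isBoundaryEdge_iff hh hp).mpr (Or.inr (Or.inl rfl)),
        by simp [Ew, Prod.ext_iff]; omega, by simp [Ew, Prod.ext_iff]; omega⟩
    · exact ⟨Ew h p h, (isBoundaryEdge_iff hh hp).mpr (Or.inr (Or.inr rfl)),
        by simp [Ew, Prod.ext_iff]; omega, by simp [Ew, Prod.ext_iff]; omega⟩
    · exact ⟨Ew h p h, (isBoundaryEdge_iff hh hp).mpr (Or.inr (Or.inr rfl)),
        by simp [Ew, Prod.ext_iff]; omega, by simp [Ew, Prod.ext_iff]; omega⟩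
lemma boundaryGraph_adj_iff {h p : ℕ} (hh : 3 ≤ h) (hp : 3 ≤ p)
    (u v : {v : ℕ × ℕ // ∃ x, IsBoundaryEdge (mobPre h p) x ∧ v ∈ x}) :
    (boundaryGraph (mobPre h p)).Adj u v ↔ badj h p u.1 v.1 := by
  have hu := (mem_boundary_vertex_iff hh hp u.1).mp u.2
  have hv := (mem_boundary_vertex_iff hh hp v.1).mp v.2
  obtain ⟨⟨u1, u2⟩, hu'⟩ := u
  obtain ⟨⟨v1, v2⟩, hv'⟩ := v
  have hadj : (boundaryGraph (mobPre h p)).Adj ⟨(u1, u2), hu'⟩ ⟨(v1, v2), hv'⟩ ↔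
      ((⟨(u1, u2), hu'⟩ : {v : ℕ × ℕ // ∃ x, IsBoundaryEdge (mobPre h p) x ∧ v ∈ x})
          ≠ ⟨(v1, v2), hv'⟩ ∧
        ∃ x, IsBoundaryEdge (mobPre h p) x ∧ (u1, u2) ∈ x ∧ (v1, v2) ∈ x) := Iff.rfl
  rw [hadj]
  simp only [ne_eq, Subtype.mk.injEq]
  exact adj_iff_badj hh hp hu hv

lemma badj_coords_iff {h p : ℕ} (hh : 3 ≤ h) (hp : 3 ≤ p) (m n : ℕ)
    (hm : m < 2 * p) (hn : n < 2 * p) :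
    badj h p (if m < p then (1, m + 1) else (h, m - p + 1))
        (if n < p then (1, n + 1) else (h, n - p + 1)) ↔
      (m ≠ n ∧ (m = (n + 1) % (2 * p) ∨ n = (m + 1) % (2 * p))) := by
  have e1 : (n + 1) % (2 * p) = if n + 1 = 2 * p then 0 else n + 1 := by
    split_ifs with hc
    · rw [hc, Nat.mod_self]
    · exact Nat.mod_eq_of_lt (by omega)
  have e2 : (m + 1) % (2 * p) = if m + 1 = 2 * p then 0 else m + 1 := by
    split_ifs with hc
    · rw [hc, Nat.mod_self]
    · exact Nat.mod_eq_of_lt (by omega)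
  rw [e1, e2]
  split_ifs with h1 h2 h3 h4 <;> simp [badj] <;> omega
/-- For `h, p ≥ 3`, the boundary graph of the Möbius strip `Möb_{h,p}` is
isomorphic to a single cycle graph of length `2p`. -/
theorem mob_boundary_iso (h p : ℕ) (hh : 3 ≤ h) (hp : 3 ≤ p) :
    Nonempty (boundaryGraph (mobPre h p) ≃g cycGraph (2 * p)) := by
  haveI : NeZero (2 * p) := ⟨by omega⟩
  haveI : Fact (1 < 2 * p) := ⟨by omega⟩
  have key : ∀ a b : ZMod (2 * p), a - b = 1 ↔ a.val = (b.val + 1) % (2 * p) := by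
    intro a b
    rw [sub_eq_iff_eq_add]
    constructor
    · intro hab
      rw [hab, ZMod.val_add, ZMod.val_one, Nat.add_comm]
    · intro hv
      exact ZMod.val_injective _ (by rw [ZMod.val_add, ZMod.val_one, hv, Nat.add_comm])
  have hinj : ∀ a b : ZMod (2 * p), a = b ↔ a.val = b.val :=
    fun a b => ⟨fun hab => by rw [hab], fun hab => ZMod.val_injective _ hab⟩
  refine ⟨RelIso.symm ⟨⟨fun i => ⟨if i.val < p then (1, i.val + 1) else (h, i.val - p + 1), ?_⟩,
    fun v => if v.1.1 = 1 then ((v.1.2 - 1 : ℕ) : ZMod (2 * p))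
      else ((p + v.1.2 - 1 : ℕ) : ZMod (2 * p)), ?_, ?_⟩, ?_⟩⟩
  · -- membership
    rename_i i
    refine (mem_boundary_vertex_iff hh hp _).mpr ?_
    have := ZMod.val_lt i
    split_ifs with hm <;> simp <;> omega
  · -- left inverse
    intro i
    have hiv := ZMod.val_lt i
    by_cases hm : i.val < p
    · have h1 : i.val + 1 - 1 = i.val := by omega
      simp [hm, h1, ZMod.natCast_val, ZMod.cast_id]
    · have h1 : p + (i.val - p + 1) - 1 = i.val := by omega
      have h2 : ¬(h = 1) := by omega
      simp [hm, h1, h2, ZMod.natCast_val, ZMod.cast_id]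
  · -- right inverse
    rintro ⟨⟨r, c⟩, hv⟩
    have hvc := (mem_boundary_vertex_iff hh hp _).mp hv
    apply Subtype.ext
    rcases hvc.1 with hr | hr
    · have h2 : ((c - 1 : ℕ) : ZMod (2 * p)).val = c - 1 := by
        rw [ZMod.val_natCast]; exact Nat.mod_eq_of_lt (by omega)
      have hlt : ((c - 1 : ℕ) : ZMod (2 * p)).val < p := by rw [h2]; omega
      have hr' : r = 1 := hr
      have hc1 : c - 1 < p := by omega
      simp [hr', hlt, h2, hc1, Prod.ext_iff]
      omega
    · have h1 : ¬(r = 1) := by omega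
      have h2 : ((p + c - 1 : ℕ) : ZMod (2 * p)).val = p + c - 1 := by
        rw [ZMod.val_natCast]; exact Nat.mod_eq_of_lt (by omega)
      have hlt : ¬(((p + c - 1 : ℕ) : ZMod (2 * p)).val < p) := by rw [h2]; omega
      have hr' : r = h := hr
      have hc1 : ¬(p + c - 1 < p) := by omega
      have hh1 : ¬(h = 1) := by omega
      simp [hh1, hlt, h2, hc1, Prod.ext_iff, hr']
      omega
  · -- map_rel_iff
    intro i j
    rw [boundaryGraph_adj_iff hh hp]
    refine Iff.trans (Iff.trans (Iff.rfl)
      (badj_coords_iff hh hp i.val j.val (ZMod.val_lt i) (ZMod.val_lt j))) ?_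
    have hcyc : (cycGraph (2 * p)).Adj i j ↔ (¬ i = j ∧ (i - j = 1 ∨ j - i = 1)) := Iff.rfl
    rw [hcyc, key i j, key j i, hinj i j]

end TDL
end

section
/- For integers n ≥ 1 and k > 3, the 3-cliques (triangles) of the star graph Star_{n,k} are exactly the vertex sets {b_i, a_{ni}, a_{ni+1}} for i ∈ {1,…,k}, with the indices of the a-vertices taken modulo nk. -/
namespace TDL

/-- The adjacency relation of the star graph `Star_{n,k}`: vertices are
`a_i` (`i ∈ ℤ/nk`, left summand) and `b_i` (`i ∈ ℤ/k`, right summand);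
`a_i ∼ a_j` iff `i − j ≡ ±1 (mod nk)`, and `b_i ∼ a_{n·i}, a_{n·i+1}`. -/
def starAdj (n k : ℕ) : ZMod (n * k) ⊕ ZMod k → ZMod (n * k) ⊕ ZMod k → Prop
  | .inl i, .inl j => i ≠ j ∧ (i - j = 1 ∨ j - i = 1)
  | .inl j, .inr i => j = ((n * i.val : ℕ) : ZMod (n * k)) ∨
      j = ((n * i.val + 1 : ℕ) : ZMod (n * k))
  | .inr i, .inl j => j = ((n * i.val : ℕ) : ZMod (n * k)) ∨
      j = ((n * i.val + 1 : ℕ) : ZMod (n * k))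
  | .inr _, .inr _ => False

/-- The star graph `Star_{n,k}`. -/
def starGraph (n k : ℕ) : SimpleGraph (ZMod (n * k) ⊕ ZMod k) where
  Adj := starAdj n k
  symm := by
    constructor
    rintro (i | i) (j | j) h
    · exact ⟨h.1.symm, h.2.symm⟩
    · exact h
    · exact h
    · exact h.elim
  loopless := by
    constructor
    rintro (i | i) h
    · exact h.1 rfl
    · exact h

end TDL

namespace TDL

/-- For `n ≥ 1` and `k > 3`, the triangles (`3`-cliques) of the star graph
`Star_{n,k}` are exactly the vertex sets `{b_i, a_{n·i}, a_{n·i+1}}`. -/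
theorem star_triangles (n k : ℕ) (hn : 1 ≤ n) (hk : 4 ≤ k) :
    {t : Finset (ZMod (n * k) ⊕ ZMod k) | (starGraph n k).IsNClique 3 t} =
      {t | ∃ i : ZMod k,
        t = {Sum.inr i, Sum.inl ((n * i.val : ℕ) : ZMod (n * k)),
             Sum.inl ((n * i.val + 1 : ℕ) : ZMod (n * k))}} := by

  have h4 : 4 ≤ n * k := hk.trans (Nat.le_mul_of_pos_left k hn)
  haveI : Fact (1 < n * k) := ⟨by omega⟩
  haveI : NeZero (n * k) := ⟨by omega⟩
  have h3 : (3 : ZMod (n * k)) ≠ 0 := by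
    have : ((3 : ℕ) : ZMod (n * k)) ≠ 0 := by
      rw [Ne, ZMod.natCast_eq_zero_iff]
      intro h
      have := Nat.le_of_dvd (by omega) h
      omega
    simpa using this
  have h1 : (1 : ZMod (n * k)) ≠ 0 := one_ne_zero
  ext t
  simp only [Set.mem_setOf_eq]
  constructor
  · rintro ⟨hclique, hcard⟩
    obtain ⟨x, y, z, hxy, hxz, hyz, rfl⟩ := Finset.card_eq_three.mp hcard
    have axy : (starGraph n k).Adj x y := hclique (by simp) (by simp) hxy
    have axz : (starGraph n k).Adj x z := hclique (by simp) (by simp) hxz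
    have ayz : (starGraph n k).Adj y z := hclique (by simp) (by simp) hyz
    rcases x with p | p <;> rcases y with q | q <;> rcases z with r | r
    · -- all inl : impossible
      exfalso
      obtain ⟨hpq, d1⟩ := axy
      obtain ⟨hpr, d3⟩ := axz
      obtain ⟨hqr, d2⟩ := ayz
      rcases d1 with d1 | d1 <;> rcases d2 with d2 | d2 <;> rcases d3 with d3 | d3
      · exact h1 (by linear_combination d3 - d1 - d2)
      · exact h3 (by linear_combination - d1 - d2 - d3)
      · exact h1 (by linear_combination d1 - d2 - d3)
      · exact h1 (by linear_combination d2 - d1 - d3)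
      · exact h1 (by linear_combination d2 - d1 - d3)
      · exact h1 (by linear_combination d1 - d2 - d3)
      · exact h3 (by linear_combination - d1 - d2 - d3)
      · exact h1 (by linear_combination d3 - d1 - d2)
    · -- inl p, inl q, inr r
      refine ⟨r, ?_⟩
      rcases axz with rfl | rfl <;> rcases ayz with rfl | rfl <;>
        first
        | exact absurd rfl hxy
        | rfl
        | (ext a; simp only [Finset.mem_insert, Finset.mem_singleton]; tauto)
    · -- inl p, inr q, inl r
      refine ⟨q, ?_⟩
      rcases axy with rfl | rfl <;> rcases ayz with rfl | rfl <;>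
        first
        | exact absurd rfl hxz
        | rfl
        | (ext a; simp only [Finset.mem_insert, Finset.mem_singleton]; tauto)
    · exact ayz.elim
    · -- inr p, inl q, inl r
      refine ⟨p, ?_⟩
      rcases axy with rfl | rfl <;> rcases axz with rfl | rfl <;>
        first
        | exact absurd rfl hyz
        | rfl
        | (ext a; simp only [Finset.mem_insert, Finset.mem_singleton]; tauto)
    · exact axz.elim
    · exact axy.elim
    · exact axy.elim
  · rintro ⟨i, rfl⟩
    have hAB : ((n * i.val : ℕ) : ZMod (n * k)) + 1 = ((n * i.val + 1 : ℕ) : ZMod (n * k)) := by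
      push_cast; ring
    have hne : ((n * i.val : ℕ) : ZMod (n * k)) ≠ ((n * i.val + 1 : ℕ) : ZMod (n * k)) := by
      intro h
      rw [← hAB, left_eq_add] at h
      exact h1 h
    constructor
    · intro a ha b hb hab
      simp only [Finset.coe_insert, Set.mem_insert_iff, Finset.coe_singleton,
        Finset.mem_singleton, Set.mem_singleton_iff] at ha hb
      rcases ha with rfl | rfl | rfl <;> rcases hb with rfl | rfl | rfl <;>
        first
        | exact absurd rfl hab
        | exact Or.inl rfl
        | exact Or.inr rfl
        | exact ⟨hne, Or.inr (by rw [← hAB]; ring)⟩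
        | exact ⟨hne.symm, Or.inl (by rw [← hAB]; ring)⟩
    · rw [Finset.card_insert_of_notMem (by simp), Finset.card_insert_of_notMem (by simp [hne]),
        Finset.card_singleton]

end TDL
end
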